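/- arXiv:2208.06126 — 6 statements merged into one kernel-verified Lean document; each statement's English description precedes it below -/
import Mathlib

section
/- Let F be a simple graph all of whose connected components are 2-edge-connected (i.e., each component is connected and remains connected after deleting any single edge). Then for every natural number n, the ordinary Turán number equals the connected Turán number: ex(n,F) = ex_c(n,F). -/
open SimpleGraph

/-- `G` contains a copy of `F`, i.e. a subgraph isomorphic to `F`
(given by an injective graph homomorphism). -/
def ContainsCopy {α β : Type*} (F : SimpleGraph α) (G : SimpleGraph β) : Prop :=
  ∃ f : α ↪ β, ∀ ⦃a b : α⦄, F.Adj a b → G.Adj (f a) (f b)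

/-- The (ordinary) Turán number `ex(n, F)`: the maximum number of edges of an
`F`-free simple graph on `n` vertices. -/
noncomputable def exTuran {α : Type*} (n : ℕ) (F : SimpleGraph α) : ℕ :=
  sSup {m | ∃ G : SimpleGraph (Fin n), ¬ ContainsCopy F G ∧ m = G.edgeSet.ncard}

/-- The connected Turán number `ex_c(n, F)`: the maximum number of edges of a
connected `F`-free simple graph on `n` vertices. -/
noncomputable def exConn {α : Type*} (n : ℕ) (F : SimpleGraph α) : ℕ :=
  sSup {m | ∃ G : SimpleGraph (Fin n), G.Connected ∧ ¬ ContainsCopy F G ∧ m = G.edgeSet.ncard}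

/-- A graph is 2-edge-connected if it is connected and remains connected after
deleting any single edge. -/
def IsTwoEdgeConnected {V : Type*} (G : SimpleGraph V) : Prop :=
  G.Connected ∧ ∀ e ∈ G.edgeSet, (G.deleteEdges {e}).Connected

/-- Adding an edge between two non-reachable vertices preserves `F`-freeness,
when all components of `F` are 2-edge-connected. -/
lemma key_lemma {W : Type*} [Fintype W] (F : SimpleGraph W)
    (h : ∀ c : F.ConnectedComponent, IsTwoEdgeConnected (F.induce c.supp))
    {n : ℕ} {G : SimpleGraph (Fin n)} (hfree : ¬ ContainsCopy F G)
    {u v : Fin n} (hr : ¬ G.Reachable u v) :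
    ¬ ContainsCopy F (G ⊔ fromEdgeSet {s(u,v)}) := by
  rintro ⟨f, hf⟩
  apply hfree
  refine ⟨f, ?_⟩
  intro a b hab
  by_contra hG
  have h' := hf hab
  rw [sup_adj, fromEdgeSet_adj] at h'
  rcases h' with h' | ⟨heq, _⟩
  · exact hG h'
  rw [Set.mem_singleton_iff] at heq
  -- set up the component of `a`
  set c := F.connectedComponentMk a with hc
  have ha : a ∈ c.supp := by
    rw [ConnectedComponent.mem_supp_iff]
  have hb : b ∈ c.supp := by
    rw [ConnectedComponent.mem_supp_iff, hc]
    exact (ConnectedComponent.sound hab.reachable.symm)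
  set e : Sym2 c.supp := s((⟨a, ha⟩ : c.supp), (⟨b, hb⟩ : c.supp)) with he
  have heE : e ∈ (F.induce c.supp).edgeSet := by
    rw [he, mem_edgeSet]
    exact hab
  obtain ⟨-, h2⟩ := h c
  have hreach := (h2 e heE).preconnected ⟨a, ha⟩ ⟨b, hb⟩
  -- map the walk to `G`
  have hhom : ∀ x y : c.supp, ((F.induce c.supp).deleteEdges {e}).Adj x y →
      G.Adj (f x) (f y) := by
    intro x y hxy
    rw [deleteEdges_adj] at hxy
    obtain ⟨hxy1, hxy2⟩ := hxy
    have hF : F.Adj x.val y.val := hxy1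
    have h3 := hf hF
    rw [sup_adj, fromEdgeSet_adj] at h3
    rcases h3 with h3 | ⟨h3, -⟩
    · exact h3
    exfalso
    apply hxy2
    rw [Set.mem_singleton_iff] at h3
    rw [heq.symm] at h3
    rw [Sym2.eq_iff] at h3
    rw [Set.mem_singleton_iff, he, Sym2.eq_iff]
    rcases h3 with ⟨h3, h4⟩ | ⟨h3, h4⟩
    · left
      exact ⟨Subtype.ext (f.injective h3), Subtype.ext (f.injective h4)⟩
    · right
      exact ⟨Subtype.ext (f.injective h3), Subtype.ext (f.injective h4)⟩
  have hreachG : G.Reachable (f a) (f b) :=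
    hreach.map (⟨fun x => f x.val, fun {x y} hxy => hhom x y hxy⟩ :
      ((F.induce c.supp).deleteEdges {e}) →g G)
  rw [Sym2.eq_iff] at heq
  rcases heq with ⟨h3, h4⟩ | ⟨h3, h4⟩
  · exact hr (h3 ▸ h4 ▸ hreachG)
  · exact hr (h4 ▸ h3 ▸ hreachG.symm)

/-- Any `F`-free graph extends to a connected `F`-free supergraph. -/
lemma extend_lemma {W : Type*} [Fintype W] (F : SimpleGraph W)
    (h : ∀ c : F.ConnectedComponent, IsTwoEdgeConnected (F.induce c.supp))
    {n : ℕ} (hn : n ≠ 0) :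
    ∀ k (G : SimpleGraph (Fin n)), ¬ ContainsCopy F G →
      ((⊤ : SimpleGraph (Fin n)).edgeSet \ G.edgeSet).ncard ≤ k →
      ∃ G' : SimpleGraph (Fin n), G'.Connected ∧ ¬ ContainsCopy F G' ∧ G ≤ G' := by
  intro k
  induction k with
  | zero =>
    intro G hfree hk
    by_cases hc : G.Connected
    · exact ⟨G, hc, hfree, le_rfl⟩
    exfalso
    have hne : Nonempty (Fin n) := ⟨⟨0, Nat.pos_of_ne_zero hn⟩⟩
    have hpre : ¬ G.Preconnected := fun hp => hc ((connected_iff G).mpr ⟨hp, hne⟩)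
    unfold SimpleGraph.Preconnected at hpre
    push_neg at hpre
    obtain ⟨x, y, hxy⟩ := hpre
    have hne' : x ≠ y := fun hxy' => hxy (hxy' ▸ Reachable.refl x)
    have hmem : s(x, y) ∈ (⊤ : SimpleGraph (Fin n)).edgeSet \ G.edgeSet := by
      constructor
      · rw [mem_edgeSet]; exact hne'
      · rw [mem_edgeSet]; exact fun hadj => hxy hadj.reachable
    have : ((⊤ : SimpleGraph (Fin n)).edgeSet \ G.edgeSet).ncard = 0 := Nat.le_zero.mp hk
    rw [Set.ncard_eq_zero (Set.toFinite _)] at this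
    rw [this] at hmem
    exact hmem
  | succ k ih =>
    intro G hfree hk
    by_cases hc : G.Connected
    · exact ⟨G, hc, hfree, le_rfl⟩
    have hne : Nonempty (Fin n) := ⟨⟨0, Nat.pos_of_ne_zero hn⟩⟩
    have hpre : ¬ G.Preconnected := fun hp => hc ((connected_iff G).mpr ⟨hp, hne⟩)
    unfold SimpleGraph.Preconnected at hpre
    push_neg at hpre
    obtain ⟨x, y, hxy⟩ := hpre
    have hne' : x ≠ y := fun hxy' => hxy (hxy' ▸ Reachable.refl x)
    have hnadj : ¬ G.Adj x y := fun hadj => hxy hadj.reachable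
    set G2 := G ⊔ fromEdgeSet {s(x, y)} with hG2
    have hfree2 : ¬ ContainsCopy F G2 := key_lemma F h hfree hxy
    have hle : G ≤ G2 := le_sup_left
    have hmem : s(x, y) ∈ (⊤ : SimpleGraph (Fin n)).edgeSet \ G.edgeSet := by
      constructor
      · rw [mem_edgeSet]; exact hne'
      · rw [mem_edgeSet]; exact hnadj
    have hsub : (⊤ : SimpleGraph (Fin n)).edgeSet \ G2.edgeSet ⊆
        ((⊤ : SimpleGraph (Fin n)).edgeSet \ G.edgeSet) \ {s(x, y)} := by
      intro e he
      obtain ⟨he1, he2⟩ := he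
      refine ⟨⟨he1, fun heG => he2 (edgeSet_mono hle heG)⟩, ?_⟩
      rw [Set.mem_singleton_iff]
      rintro rfl
      apply he2
      rw [mem_edgeSet, hG2, sup_adj, fromEdgeSet_adj]
      exact Or.inr ⟨rfl, hne'⟩
    have hcard : ((⊤ : SimpleGraph (Fin n)).edgeSet \ G2.edgeSet).ncard ≤ k := by
      have h1 := Set.ncard_le_ncard hsub (Set.toFinite _)
      have h2 := Set.ncard_diff_singleton_lt_of_mem hmem (Set.toFinite _)
      omega
    obtain ⟨G', hG'c, hG'f, hG'le⟩ := ih G2 hfree2 hcard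
    exact ⟨G', hG'c, hG'f, hle.trans hG'le⟩

/-- If every connected component of `F` is 2-edge-connected, then the Turán number
equals the connected Turán number for every `n`. -/
theorem exTuran_eq_exConn_of_components_twoEdgeConnected
    {W : Type*} [Fintype W] (F : SimpleGraph W)
    (h : ∀ c : F.ConnectedComponent, IsTwoEdgeConnected (F.induce c.supp)) (n : ℕ) :
    exTuran n F = exConn n F := by
  have hbound : ∀ G : SimpleGraph (Fin n),
      G.edgeSet.ncard ≤ (Set.univ : Set (Sym2 (Fin n))).ncard := fun G =>
    Set.ncard_le_ncard (Set.subset_univ _) (Set.toFinite _)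
  have hbddT : BddAbove {m | ∃ G : SimpleGraph (Fin n),
      ¬ ContainsCopy F G ∧ m = G.edgeSet.ncard} := by
    refine ⟨(Set.univ : Set (Sym2 (Fin n))).ncard, ?_⟩
    rintro m ⟨G, -, rfl⟩
    exact hbound G
  have hbddC : BddAbove {m | ∃ G : SimpleGraph (Fin n),
      G.Connected ∧ ¬ ContainsCopy F G ∧ m = G.edgeSet.ncard} := by
    refine ⟨(Set.univ : Set (Sym2 (Fin n))).ncard, ?_⟩
    rintro m ⟨G, -, -, rfl⟩
    exact hbound G
  apply le_antisymm
  · apply csSup_le'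
    rintro m ⟨G, hfree, rfl⟩
    by_cases hn : n = 0
    · subst hn
      have : G.edgeSet = ∅ := by
        ext e
        induction e using Sym2.ind with
        | _ x y => exact absurd x.isLt (by omega)
      rw [this]
      simp
    · obtain ⟨G', hG'c, hG'f, hG'le⟩ := extend_lemma F h hn
        (((⊤ : SimpleGraph (Fin n)).edgeSet \ G.edgeSet).ncard) G hfree le_rfl
      calc G.edgeSet.ncard ≤ G'.edgeSet.ncard :=
            Set.ncard_le_ncard (edgeSet_mono hG'le) (Set.toFinite _)
        _ ≤ exConn n F := le_csSup hbddC ⟨G', hG'c, hG'f, rfl⟩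
  · apply csSup_le'
    rintro m ⟨G, -, hfree, rfl⟩
    exact le_csSup hbddT ⟨G, hfree, rfl⟩
end

section
/- Let T be a tree on k ≥ 4 vertices and let ℓ(T) denote the number of vertices in a longest path of T. Then for every n ≥ ℓ(T), ex_c(n,T) ≥ C(⌈ℓ(T)/2⌉, 2) + ⌊(ℓ(T)−2)/2⌋ · (n − ⌈ℓ(T)/2⌉), where C(m,2) denotes the binomial coefficient m choose 2. -/
open SimpleGraph

/-- `ℓ(G)`: the number of vertices of a longest path in `G`. -/
noncomputable def longestPathCard {V : Type*} (G : SimpleGraph V) : ℕ :=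
  sSup {m | ∃ (u v : V) (p : G.Walk u v), p.IsPath ∧ m = p.length + 1}

lemma le_exConn {α : Type*} (n : ℕ) (F : SimpleGraph α) (G : SimpleGraph (Fin n))
    (h1 : G.Connected) (h2 : ¬ ContainsCopy F G) : G.edgeSet.ncard ≤ exConn n F := by
  apply le_csSup
  · refine ⟨Fintype.card (Sym2 (Fin n)), ?_⟩
    rintro m ⟨G', -, -, rfl⟩
    have := Set.ncard_le_ncard (Set.subset_univ G'.edgeSet) Set.finite_univ
    rwa [Set.ncard_univ, Nat.card_eq_fintype_card] at this
  · exact ⟨G, h1, h2, rfl⟩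

def cliqueBook (n a b : ℕ) : SimpleGraph (Fin n) where
  Adj x y := x ≠ y ∧ ((x:ℕ) < a ∧ (y:ℕ) < a ∨ (x:ℕ) < b ∧ a ≤ (y:ℕ) ∨ (y:ℕ) < b ∧ a ≤ (x:ℕ))
  symm := by
    constructor
    intro x y ⟨h1, h2⟩
    exact ⟨h1.symm, by tauto⟩
  loopless := by constructor; intro x ⟨h1, _⟩; exact h1 rfl

instance (n a b : ℕ) : DecidableRel (cliqueBook n a b).Adj := by
  unfold cliqueBook; intro x y; exact instDecidableAnd

lemma cliqueBook_adj {n a b : ℕ} {x y : Fin n} :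
    (cliqueBook n a b).Adj x y ↔ x ≠ y ∧
      ((x:ℕ) < a ∧ (y:ℕ) < a ∨ (x:ℕ) < b ∧ a ≤ (y:ℕ) ∨ (y:ℕ) < b ∧ a ≤ (x:ℕ)) := Iff.rfl

lemma cliqueBook_connected {n a b : ℕ} (hb : 1 ≤ b) (hba : b + 1 ≤ a) (han : a ≤ n) :
    (cliqueBook n a b).Connected := by
  have hn : 0 < n := by omega
  set v0 : Fin n := ⟨0, hn⟩ with hv0
  have key : ∀ v : Fin n, (cliqueBook n a b).Reachable v v0 := by
    intro v
    by_cases h : v = v0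
    · rw [h]
    · apply SimpleGraph.Adj.reachable
      rw [cliqueBook_adj]
      refine ⟨h, ?_⟩
      have hvne : (v:ℕ) ≠ 0 := by
        intro hc; exact h (Fin.ext hc)
      by_cases hva : (v:ℕ) < a
      · left; exact ⟨hva, by simp [hv0]; omega⟩
      · right; right; simp [hv0]; omega
  have : Nonempty (Fin n) := ⟨v0⟩
  rw [connected_iff]
  exact ⟨fun u v => (key u).trans (key v).symm, this⟩

lemma cliqueBook_chain_bound {n a b : ℕ} (hba : b + 1 ≤ a) (L : List (Fin n))
    (hc : L.Chain' (cliqueBook n a b).Adj) (hnd : L.Nodup) : L.length ≤ a + b := by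
  set m := L.length with hm
  rcases Nat.eq_zero_or_pos m with hm0 | hm1
  · omega
  have hinj : Function.Injective L.get := List.nodup_iff_injective_get.mp hnd
  have hadj : ∀ (i : ℕ) (h : i + 1 < m),
      (cliqueBook n a b).Adj (L.get ⟨i, by omega⟩) (L.get ⟨i + 1, by omega⟩) := by
    intro i h
    exact List.isChain_iff_getElem.mp hc i (by omega)
  have hstep : ∀ (i : ℕ) (h : i + 1 < m),
      a ≤ (L.get ⟨i, by omega⟩ : ℕ) → ((L.get ⟨i + 1, by omega⟩ : ℕ)) < b := by
    intro i h hi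
    obtain ⟨-, h2⟩ := cliqueBook_adj.mp (hadj i h)
    omega
  have hstep' : ∀ (i : ℕ) (h : i + 1 < m),
      a ≤ (L.get ⟨i + 1, by omega⟩ : ℕ) → ((L.get ⟨i, by omega⟩ : ℕ)) < b := by
    intro i h hi
    obtain ⟨-, h2⟩ := cliqueBook_adj.mp (hadj i h)
    omega
  set J : Finset (Fin m) := Finset.univ.filter (fun i => a ≤ (L.get i : ℕ)) with hJ
  set C : Finset (Fin m) := Finset.univ.filter (fun i => ¬ a ≤ (L.get i : ℕ)) with hC
  have hJC : J.card + C.card = m := by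
    rw [hJ, hC, Finset.card_filter_add_card_filter_not, Finset.card_univ,
      Fintype.card_fin]
  have hCa : C.card ≤ a := by
    have hmaps : ∀ i ∈ C, (L.get i : ℕ) ∈ Finset.range a := by
      intro i hi
      simp only [hC, Finset.mem_filter, Finset.mem_univ, true_and] at hi
      simp only [Finset.mem_range]; omega
    have hinj2 : Set.InjOn (fun i => ((L.get i : Fin n) : ℕ)) C :=
      fun i _ j _ h => hinj (Fin.val_injective h)
    simpa using Finset.card_le_card_of_injOn _ hmaps hinj2
  -- predecessor injection
  set g : Fin m → ℕ :=
    fun i => (L.get ⟨(i:ℕ)-1, lt_of_le_of_lt (Nat.sub_le _ _) i.isLt⟩ : ℕ) with hg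
  set I' : Finset (Fin m) := Finset.univ.filter (fun i => a ≤ (L.get i : ℕ) ∧ 1 ≤ (i:ℕ)) with hI'
  have hI'maps : ∀ i ∈ I', g i ∈ Finset.range b := by
    intro i hi
    simp only [hI', Finset.mem_filter, Finset.mem_univ, true_and] at hi
    obtain ⟨h1, h2⟩ := hi
    have hlt : (i:ℕ) - 1 + 1 < m := by have := i.isLt; omega
    have hidx : (⟨(i:ℕ)-1+1, by omega⟩ : Fin m) = i :=
      Fin.ext (show (i:ℕ)-1+1 = (i:ℕ) by omega)
    have := hstep' ((i:ℕ)-1) hlt (by rw [hidx]; exact h1)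
    simpa [hg] using this
  have hI'inj : Set.InjOn g I' := by
    intro i hi j hj hij
    simp only [Finset.mem_coe, hI', Finset.mem_filter, Finset.mem_univ, true_and] at hi hj
    simp only [hg] at hij
    have h3 := hinj (Fin.val_injective hij)
    have h5 : (i:ℕ) - 1 = (j:ℕ) - 1 := congrArg Fin.val h3
    have hi2 := hi.2
    have hj2 := hj.2
    exact Fin.ext (show (i:ℕ) = (j:ℕ) by omega)
  have hI'b : I'.card ≤ b := by
    simpa using Finset.card_le_card_of_injOn g hI'maps hI'inj
  have hJI : J.card ≤ I'.card + 1 := by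
    have hsub : J ⊆ insert (⟨0, hm1⟩ : Fin m) I' := by
      intro i hi
      simp only [hJ, Finset.mem_filter, Finset.mem_univ, true_and] at hi
      rcases Nat.eq_zero_or_pos (i:ℕ) with h0 | h0
      · have : i = (⟨0, hm1⟩ : Fin m) := Fin.ext h0
        rw [this]; exact Finset.mem_insert_self _ _
      · exact Finset.mem_insert_of_mem (by
          simp only [hI', Finset.mem_filter, Finset.mem_univ, true_and]
          exact ⟨hi, h0⟩)
    calc J.card ≤ _ := Finset.card_le_card hsub
      _ ≤ I'.card + 1 := Finset.card_insert_le _ _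
  by_cases htight : J.card ≤ b
  · omega
  -- tight case: J.card = b + 1
  have hI'card : I'.card = b := by omega
  have hgsurj : ∀ s : ℕ, s < b → ∃ i ∈ I', g i = s := by
    have himg : I'.image g = Finset.range b := by
      apply Finset.eq_of_subset_of_card_le
      · intro x hx
        obtain ⟨i, hi, rfl⟩ := Finset.mem_image.mp hx
        exact hI'maps i hi
      · rw [Finset.card_image_of_injOn hI'inj, hI'card, Finset.card_range]
    intro s hs
    exact Finset.mem_image.mp (by rw [himg]; exact Finset.mem_range.mpr hs)
  have hfirst : a ≤ (L.get ⟨0, hm1⟩ : ℕ) := by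
    by_contra hfa
    have hsub : J ⊆ I' := by
      intro i hi
      simp only [hJ, Finset.mem_filter, Finset.mem_univ, true_and] at hi
      simp only [hI', Finset.mem_filter, Finset.mem_univ, true_and]
      refine ⟨hi, ?_⟩
      rcases Nat.eq_zero_or_pos (i:ℕ) with h0 | h0
      · exfalso
        have : i = (⟨0, hm1⟩ : Fin m) := Fin.ext h0
        rw [this] at hi; exact hfa hi
      · exact h0
    have := Finset.card_le_card hsub; omega
  have hCb : ∀ i : Fin m, (L.get i : ℕ) < a → (L.get i : ℕ) < b := by
    by_contra hbad
    push_neg at hbad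
    obtain ⟨j0, hj1, hj2⟩ := hbad
    set S : Finset (Fin m) :=
      Finset.univ.filter (fun i : Fin m => (L.get i : ℕ) < a ∧ b ≤ (L.get i : ℕ)) with hS
    have hSne : S.Nonempty :=
      ⟨j0, Finset.mem_filter.mpr ⟨Finset.mem_univ _, hj1, hj2⟩⟩
    obtain ⟨j, hjS, hjmin⟩ := S.exists_min_image (fun i => (i:ℕ)) hSne
    simp only [hS, Finset.mem_filter, Finset.mem_univ, true_and] at hjS
    have hj0 : 1 ≤ (j:ℕ) := by
      rcases Nat.eq_zero_or_pos (j:ℕ) with h0 | h0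
      · exfalso
        have : j = (⟨0, hm1⟩ : Fin m) := Fin.ext h0
        rw [this] at hjS; omega
      · exact h0
    have hjp : (j:ℕ) - 1 < m := lt_of_le_of_lt (Nat.sub_le _ _) j.isLt
    have hlt : (j:ℕ) - 1 + 1 < m := by have := j.isLt; omega
    have hidx : (⟨(j:ℕ)-1+1, by omega⟩ : Fin m) = j :=
      Fin.ext (show (j:ℕ)-1+1 = (j:ℕ) by omega)
    rcases Nat.lt_or_ge ((L.get ⟨(j:ℕ)-1, hjp⟩ : Fin n) : ℕ) a with hpa | hpa
    · rcases Nat.lt_or_ge ((L.get ⟨(j:ℕ)-1, hjp⟩ : Fin n) : ℕ) b with hpb | hpb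
      · obtain ⟨i, hiI, hgi⟩ := hgsurj _ hpb
        simp only [hI', Finset.mem_filter, Finset.mem_univ, true_and] at hiI
        simp only [hg] at hgi
        have h6 := hinj (Fin.val_injective hgi)
        have h7 : (i:ℕ) - 1 = (j:ℕ) - 1 := congrArg Fin.val h6
        have h8 : i = j := Fin.ext (show (i:ℕ) = (j:ℕ) by omega)
        rw [h8] at hiI
        omega
      · have hjpS : (⟨(j:ℕ)-1, hjp⟩ : Fin m) ∈ S :=
          Finset.mem_filter.mpr ⟨Finset.mem_univ _, hpa, hpb⟩
        have := hjmin _ hjpS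
        simp only at this
        omega
    · have := hstep ((j:ℕ)-1) hlt hpa
      rw [hidx] at this
      omega
  have hCb' : C.card ≤ b := by
    have hmaps : ∀ i ∈ C, (L.get i : ℕ) ∈ Finset.range b := by
      intro i hi
      simp only [hC, Finset.mem_filter, Finset.mem_univ, true_and] at hi
      exact Finset.mem_range.mpr (hCb i (by omega))
    have hinj2 : Set.InjOn (fun i => ((L.get i : Fin n) : ℕ)) C :=
      fun i _ j _ h => hinj (Fin.val_injective h)
    simpa using Finset.card_le_card_of_injOn _ hmaps hinj2
  omega

lemma card_filter_val_lt (n c : ℕ) (h : c ≤ n) :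
    (Finset.univ.filter (fun v : Fin n => (v:ℕ) < c)).card = c := by
  have key : Finset.univ.filter (fun v : Fin n => (v:ℕ) < c)
      = (Finset.range c).attachFin
          (fun m hm => lt_of_lt_of_le (Finset.mem_range.mp hm) h) := by
    ext v
    simp [Finset.mem_attachFin]
  rw [key, Finset.card_attachFin, Finset.card_range]

lemma cliqueBook_degree_lt_b {n a b : ℕ} (hba : b + 1 ≤ a) (v : Fin n) (hv : (v:ℕ) < b) :
    (cliqueBook n a b).degree v = n - 1 := by
  rw [← SimpleGraph.card_neighborFinset_eq_degree, SimpleGraph.neighborFinset_eq_filter]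
  have : Finset.univ.filter (fun w => (cliqueBook n a b).Adj v w) = Finset.univ.erase v := by
    ext w
    simp only [Finset.mem_filter, Finset.mem_univ, true_and, Finset.mem_erase, and_true]
    rw [cliqueBook_adj]
    constructor
    · rintro ⟨h1, -⟩; exact fun h => h1 h.symm
    · intro h1
      refine ⟨fun h => h1 h.symm, ?_⟩
      have hw := w.isLt
      by_cases hwa : (w:ℕ) < a
      · left; omega
      · right; left; omega
  rw [this, Finset.card_erase_of_mem (Finset.mem_univ v), Finset.card_univ, Fintype.card_fin]

lemma cliqueBook_degree_mid {n a b : ℕ} (hba : b + 1 ≤ a) (han : a ≤ n) (v : Fin n)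
    (hv1 : b ≤ (v:ℕ)) (hv2 : (v:ℕ) < a) :
    (cliqueBook n a b).degree v = a - 1 := by
  rw [← SimpleGraph.card_neighborFinset_eq_degree, SimpleGraph.neighborFinset_eq_filter]
  have heq : Finset.univ.filter (fun w => (cliqueBook n a b).Adj v w)
      = (Finset.univ.filter (fun w : Fin n => (w:ℕ) < a)).erase v := by
    ext w
    simp only [Finset.mem_filter, Finset.mem_univ, true_and, Finset.mem_erase]
    rw [cliqueBook_adj]
    constructor
    · rintro ⟨h1, h2⟩
      refine ⟨fun h => h1 h.symm, by omega⟩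
    · rintro ⟨h1, h2⟩
      exact ⟨fun h => h1 h.symm, by omega⟩
  have hmem : v ∈ Finset.univ.filter (fun w : Fin n => (w:ℕ) < a) := by
    simp only [Finset.mem_filter, Finset.mem_univ, true_and]
    exact hv2
  rw [heq, Finset.card_erase_of_mem hmem, card_filter_val_lt n a han]

lemma cliqueBook_degree_out {n a b : ℕ} (hba : b + 1 ≤ a) (han : a ≤ n) (v : Fin n)
    (hv : a ≤ (v:ℕ)) :
    (cliqueBook n a b).degree v = b := by
  rw [← SimpleGraph.card_neighborFinset_eq_degree, SimpleGraph.neighborFinset_eq_filter]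
  have heq : Finset.univ.filter (fun w => (cliqueBook n a b).Adj v w)
      = Finset.univ.filter (fun w : Fin n => (w:ℕ) < b) := by
    ext w
    simp only [Finset.mem_filter, Finset.mem_univ, true_and]
    rw [cliqueBook_adj]
    constructor
    · rintro ⟨h1, h2⟩; omega
    · intro h1
      refine ⟨fun h => ?_, by omega⟩
      rw [h] at hv; omega
  rw [heq, card_filter_val_lt n b (by omega)]

lemma cliqueBook_edge_count {n a b : ℕ} (hba : b + 1 ≤ a) (han : a ≤ n) :
    (cliqueBook n a b).edgeSet.ncard = a.choose 2 + b * (n - a) := by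
  have hsum := SimpleGraph.sum_degrees_eq_twice_card_edges (cliqueBook n a b)
  -- split the sum
  have hsplit1 := Finset.sum_filter_add_sum_filter_not Finset.univ
    (fun v : Fin n => (v:ℕ) < a) (fun v => (cliqueBook n a b).degree v)
  have hsplit2 := Finset.sum_filter_add_sum_filter_not
    (Finset.univ.filter (fun v : Fin n => (v:ℕ) < a))
    (fun v : Fin n => (v:ℕ) < b) (fun v => (cliqueBook n a b).degree v)
  have hc1 : ((Finset.univ.filter (fun v : Fin n => (v:ℕ) < a)).filter
      (fun v : Fin n => (v:ℕ) < b)).card = b := by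
    rw [Finset.filter_filter]
    have heq2 : Finset.univ.filter (fun v : Fin n => (v:ℕ) < a ∧ (v:ℕ) < b)
        = Finset.univ.filter (fun v : Fin n => (v:ℕ) < b) := by
      ext v
      simp only [Finset.mem_filter, Finset.mem_univ, true_and]
      omega
    rw [heq2, card_filter_val_lt n b (by omega)]
  have hc2 : ((Finset.univ.filter (fun v : Fin n => (v:ℕ) < a)).filter
      (fun v : Fin n => ¬ (v:ℕ) < b)).card = a - b := by
    have h3 := Finset.card_filter_add_card_filter_not
      (s := Finset.univ.filter (fun v : Fin n => (v:ℕ) < a)) (fun v : Fin n => (v:ℕ) < b)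
    rw [card_filter_val_lt n a han] at h3
    omega
  have hc3 : (Finset.univ.filter (fun v : Fin n => ¬ (v:ℕ) < a)).card = n - a := by
    have h3 := Finset.card_filter_add_card_filter_not
      (s := (Finset.univ : Finset (Fin n))) (fun v : Fin n => (v:ℕ) < a)
    rw [card_filter_val_lt n a han, Finset.card_univ, Fintype.card_fin] at h3
    omega
  -- degree sums on each part
  have hs1 : ∑ v ∈ (Finset.univ.filter (fun v : Fin n => (v:ℕ) < a)).filter
      (fun v : Fin n => (v:ℕ) < b), (cliqueBook n a b).degree v = b * (n - 1) := by
    rw [Finset.sum_congr rfl (fun v hv => ?_), Finset.sum_const, hc1, smul_eq_mul]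
    simp only [Finset.mem_filter] at hv
    exact cliqueBook_degree_lt_b hba v hv.2
  have hs2 : ∑ v ∈ (Finset.univ.filter (fun v : Fin n => (v:ℕ) < a)).filter
      (fun v : Fin n => ¬ (v:ℕ) < b), (cliqueBook n a b).degree v = (a - b) * (a - 1) := by
    rw [Finset.sum_congr rfl (fun v hv => ?_), Finset.sum_const, hc2, smul_eq_mul]
    simp only [Finset.mem_filter] at hv
    exact cliqueBook_degree_mid hba han v (by omega) hv.1.2
  have hs3 : ∑ v ∈ Finset.univ.filter (fun v : Fin n => ¬ (v:ℕ) < a),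
      (cliqueBook n a b).degree v = (n - a) * b := by
    rw [Finset.sum_congr rfl (fun v hv => ?_), Finset.sum_const, hc3, smul_eq_mul]
    simp only [Finset.mem_filter] at hv
    exact cliqueBook_degree_out hba han v (by omega)
  have htotal : 2 * (cliqueBook n a b).edgeFinset.card
      = b * (n - 1) + (a - b) * (a - 1) + (n - a) * b := by
    rw [← hsum, ← hsplit1, ← hsplit2, hs1, hs2, hs3]
  have halg : b * (n - 1) + (a - b) * (a - 1) + (n - a) * b
      = 2 * (a.choose 2 + b * (n - a)) := by
    have h1 : 1 ≤ a := by omega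
    have h2 : 1 ≤ n := by omega
    have hch : 2 * a.choose 2 = a * (a - 1) := by
      rw [Nat.choose_two_right]
      have hev : 2 ∣ a * (a - 1) := by
        rcases Nat.even_or_odd a with h | h
        · exact Dvd.dvd.mul_right h.two_dvd _
        · refine Dvd.dvd.mul_left ?_ _
          rcases h with ⟨c, hc⟩
          exact ⟨c, by omega⟩
      omega
    have key : b * (n - 1) + (a - b) * (a - 1) + (n - a) * b
        = a * (a - 1) + 2 * (b * (n - a)) := by
      zify [han, h1, h2, (show b ≤ a by omega)]
      ring
    rw [key, Nat.mul_add, hch]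
  have hfin : (cliqueBook n a b).edgeFinset.card = a.choose 2 + b * (n - a) := by omega
  rw [← hfin, SimpleGraph.edgeFinset, Set.ncard_eq_toFinset_card']

lemma cliqueBook_path_bound {n a b : ℕ} (hba : b + 1 ≤ a) {u v : Fin n}
    (q : (cliqueBook n a b).Walk u v) (hq : q.IsPath) : q.length + 1 ≤ a + b := by
  have := cliqueBook_chain_bound hba q.support q.isChain_adj_support hq.support_nodup
  rwa [SimpleGraph.Walk.length_support] at this

/-- Proposition (longest path construction): for a tree `T` on `k ≥ 4` vertices and
`n ≥ ℓ(T)`, `ex_c(n,T) ≥ C(⌈ℓ(T)/2⌉, 2) + ⌊(ℓ(T)-2)/2⌋ (n - ⌈ℓ(T)/2⌉)`. -/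
theorem exConn_ge_of_longestPath {V : Type*} [Fintype V] (T : SimpleGraph V) (k : ℕ)
    (hk : 4 ≤ k) (hcard : Fintype.card V = k) (hT : T.IsTree)
    (n : ℕ) (hn : longestPathCard T ≤ n) :
    ((longestPathCard T + 1) / 2).choose 2
      + (longestPathCard T - 2) / 2 * (n - (longestPathCard T + 1) / 2) ≤ exConn n T := by
  classical
  set ℓ := longestPathCard T with hℓdef
  have hbdd : BddAbove {m | ∃ (u v : V) (p : T.Walk u v), p.IsPath ∧ m = p.length + 1} := by
    refine ⟨Fintype.card V, ?_⟩
    rintro m ⟨u, v, p, hp, rfl⟩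
    have h1 := hp.support_nodup.length_le_card
    rw [SimpleGraph.Walk.length_support] at h1
    exact h1
  have hVne : Nonempty V := by
    rw [← Fintype.card_pos_iff]
    omega
  obtain ⟨v0⟩ := hVne
  have hne : {m | ∃ (u v : V) (p : T.Walk u v), p.IsPath ∧ m = p.length + 1}.Nonempty :=
    ⟨1, v0, v0, SimpleGraph.Walk.nil, SimpleGraph.Walk.IsPath.nil, rfl⟩
  have hmemℓ : ℓ ∈ {m | ∃ (u v : V) (p : T.Walk u v), p.IsPath ∧ m = p.length + 1} := by
    rw [hℓdef]
    exact Nat.sSup_mem hne hbdd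
  have hpath_le : ∀ (u v : V) (p : T.Walk u v), p.IsPath → p.length + 1 ≤ ℓ := by
    intro u v p hp
    rw [hℓdef]
    exact le_csSup hbdd ⟨u, v, p, hp, rfl⟩
  obtain ⟨u, v, p, hp, hplen⟩ := hmemℓ
  clear_value ℓ
  -- ℓ ≥ 3
  have hl3 : 3 ≤ ℓ := by
    by_contra h3
    push_neg at h3
    have hadj_all : ∀ x y : V, x ≠ y → T.Adj x y := by
      intro x y hxy
      obtain ⟨w⟩ := hT.isConnected.preconnected x y
      obtain ⟨p', hp'⟩ := w.toPath
      have hqle := hpath_le _ _ p' hp'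
      have hne0 : p'.length ≠ 0 := by
        intro h0
        exact hxy (SimpleGraph.Walk.eq_of_length_eq_zero h0)
      have hq1 : p'.length = 1 := by omega
      exact SimpleGraph.Walk.adj_of_length_eq_one hq1
    obtain ⟨x, y, hxy⟩ := Fintype.exists_pair_of_one_lt_card (α := V) (by omega)
    have hcompl : (({x, y} : Finset V)ᶜ).Nonempty := by
      rw [← Finset.card_pos, Finset.card_compl]
      have h2 : ({x, y} : Finset V).card ≤ 2 := by
        refine le_trans (Finset.card_insert_le _ _) ?_
        simp
      omega
    obtain ⟨z, hz⟩ := hcompl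
    simp only [Finset.mem_compl, Finset.mem_insert, Finset.mem_singleton, not_or] at hz
    have h1 := hadj_all x y hxy
    have h2 := hadj_all y z (fun h => hz.2 h.symm)
    set q : T.Walk x z := SimpleGraph.Walk.cons h1 (SimpleGraph.Walk.cons h2 .nil) with hqd
    have hxz : x ≠ z := fun h => hz.1 h.symm
    have hyz : y ≠ z := fun h => hz.2 h.symm
    have hqp : q.IsPath := by
      rw [hqd, SimpleGraph.Walk.isPath_def]
      simp only [SimpleGraph.Walk.support_cons, SimpleGraph.Walk.support_nil,
        List.nodup_cons, List.mem_cons, List.mem_singleton, List.not_mem_nil,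
        List.nodup_nil, and_true, not_or, or_false]
      tauto
    have := hpath_le x z q hqp
    rw [hqd] at this
    simp [SimpleGraph.Walk.length_cons] at this
    omega
  by_cases hl4 : 4 ≤ ℓ
  · -- main case: clique-book construction
    set a := (ℓ + 1) / 2 with had
    set b := (ℓ - 2) / 2 with hbd
    clear_value a b
    have hba : b + 1 ≤ a := by omega
    have hb1 : 1 ≤ b := by omega
    have han : a ≤ n := by omega
    have hab : a + b = ℓ - 1 := by omega
    have hconn := cliqueBook_connected (n := n) hb1 hba han
    have hfree : ¬ ContainsCopy T (cliqueBook n a b) := by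
      rintro ⟨f, hf⟩
      let hom : T →g cliqueBook n a b := ⟨f, fun {x y} h => hf h⟩
      have hinj : Function.Injective (⇑hom) := fun x y hxy => f.injective hxy
      have hqp : (p.map hom).IsPath := SimpleGraph.Walk.map_isPath_of_injective hinj hp
      have hb2 := cliqueBook_path_bound hba (p.map hom) hqp
      rw [SimpleGraph.Walk.length_map] at hb2
      omega
    have hcount := cliqueBook_edge_count (n := n) (a := a) (b := b) hba han
    calc a.choose 2 + b * (n - a) = (cliqueBook n a b).edgeSet.ncard := hcount.symm
      _ ≤ exConn n T := le_exConn n T _ hconn hfree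
  · -- star case: ℓ = 3
    have hl3' : ℓ = 3 := by omega
    -- destructure the 3-vertex path
    have hplen2 : p.length = 2 := by omega
    cases p with
    | nil => simp at hplen2
    | @cons _ x _ h q =>
      have hq1 : q.length = 1 := by
        simp [SimpleGraph.Walk.length_cons] at hplen2
        omega
      have hadjxv : T.Adj x v := SimpleGraph.Walk.adj_of_length_eq_one hq1
      have hux : u ≠ x := h.ne
      have hxv : x ≠ v := hadjxv.ne
      have huv : u ≠ v := by
        have hnd := hp.support_nodup
        rw [SimpleGraph.Walk.support_cons] at hnd
        have := (List.nodup_cons.mp hnd).1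
        exact fun hc => this (hc ▸ q.end_mem_support)
      -- find a fourth vertex
      have hcompl : (({u, x, v} : Finset V)ᶜ).Nonempty := by
        rw [← Finset.card_pos, Finset.card_compl]
        have h2 : ({u, x, v} : Finset V).card ≤ 3 := by
          refine le_trans (Finset.card_insert_le _ _) ?_
          have := Finset.card_insert_le x ({v} : Finset V)
          simp at this ⊢
          omega
        omega
      obtain ⟨z, hz⟩ := hcompl
      simp only [Finset.mem_compl, Finset.mem_insert, Finset.mem_singleton, not_or] at hz
      obtain ⟨hzu, hzx, hzv⟩ := hz
      -- boundary dart from z to x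
      obtain ⟨wzx⟩ := hT.isConnected.preconnected z x
      obtain ⟨d, -, hd1, hd2⟩ := wzx.exists_boundary_dart
        {w : V | w ≠ u ∧ w ≠ x ∧ w ≠ v} ⟨hzu, hzx, hzv⟩ (by simp)
      set w := d.toProd.1 with hwd
      set y := d.toProd.2 with hyd
      have hadjwy : T.Adj w y := d.adj
      obtain ⟨hwu, hwx, hwv⟩ := hd1
      simp only [Set.mem_setOf_eq, not_and_or, not_not] at hd2
      have hy : y = u ∨ y = x ∨ y = v := by tauto
      -- rule out y = u and y = v by producing 4-vertex paths
      have hnot_u : y ≠ u := by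
        intro hyu
        rw [hyu] at hadjwy
        set q4 : T.Walk w v :=
          .cons hadjwy (.cons h (.cons hadjxv .nil)) with hq4
        have hq4p : q4.IsPath := by
          rw [hq4, SimpleGraph.Walk.isPath_def]
          simp only [SimpleGraph.Walk.support_cons, SimpleGraph.Walk.support_nil,
            List.nodup_cons, List.mem_cons, List.mem_singleton, List.not_mem_nil,
            List.nodup_nil, and_true, not_or, or_false]
          tauto
        have := hpath_le _ _ q4 hq4p
        rw [hq4] at this
        simp [SimpleGraph.Walk.length_cons] at this
        omega
      have hnot_v : y ≠ v := by
        intro hyv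
        rw [hyv] at hadjwy
        set q4 : T.Walk w u :=
          .cons hadjwy (.cons hadjxv.symm (.cons h.symm .nil)) with hq4
        have hq4p : q4.IsPath := by
          rw [hq4, SimpleGraph.Walk.isPath_def]
          simp only [SimpleGraph.Walk.support_cons, SimpleGraph.Walk.support_nil,
            List.nodup_cons, List.mem_cons, List.mem_singleton, List.not_mem_nil,
            List.nodup_nil, and_true, not_or, or_false]
          tauto
        have := hpath_le _ _ q4 hq4p
        rw [hq4] at this
        simp [SimpleGraph.Walk.length_cons] at this
        omega
      have hyx : y = x := by tauto
      rw [hyx] at hadjwy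
      -- x has three distinct neighbors u, v, w; path graph is T-free
      have hGpconn : (SimpleGraph.pathGraph n).Connected := by
        have h4 : n - 1 + 1 = n := by omega
        have := SimpleGraph.pathGraph_connected (n - 1)
        rwa [h4] at this
      have hGpfree : ¬ ContainsCopy T (SimpleGraph.pathGraph n) := by
        rintro ⟨f, hf⟩
        have a1 := hf h.symm
        have a2 := hf hadjxv
        have a3 := hf hadjwy.symm
        rw [SimpleGraph.pathGraph_adj] at a1 a2 a3
        have d1 : ((f u : Fin n) : ℕ) ≠ ((f v : Fin n) : ℕ) :=
          fun hh => huv (f.injective (Fin.val_injective hh))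
        have d2 : ((f u : Fin n) : ℕ) ≠ ((f w : Fin n) : ℕ) :=
          fun hh => hwu (f.injective (Fin.val_injective hh)).symm
        have d3 : ((f v : Fin n) : ℕ) ≠ ((f w : Fin n) : ℕ) :=
          fun hh => hwv (f.injective (Fin.val_injective hh)).symm
        omega
      have hedge : 1 ≤ (SimpleGraph.pathGraph n).edgeSet.ncard := by
        have hmem : s((⟨0, by omega⟩ : Fin n), (⟨1, by omega⟩ : Fin n))
            ∈ (SimpleGraph.pathGraph n).edgeSet := by
          rw [SimpleGraph.mem_edgeSet, SimpleGraph.pathGraph_adj]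
          left; rfl
        exact (Set.ncard_pos (Set.toFinite _)).mpr ⟨_, hmem⟩
      have hle := le_exConn n T _ hGpconn hGpfree
      rw [hl3']
      norm_num
      omega
end

section
/- Let T be a tree on k ≥ 4 vertices and let ν(T) denote the number of edges in a maximum matching of T. Then for every n ≥ k, ex_c(n,T) ≥ (ν(T)−1)(n−ν(T)+1) + C(ν(T)−1, 2), where C(m,2) denotes the binomial coefficient m choose 2. -/
open SimpleGraph

/-- `ν(G)`: the matching number of `G`, the number of edges in a largest matching. -/
noncomputable def matchingNumber {V : Type*} (G : SimpleGraph V) : ℕ :=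
  sSup {m | ∃ M : G.Subgraph, M.IsMatching ∧ m = M.edgeSet.ncard}

lemma aux_card_filter_lt {n t : ℕ} (h : t ≤ n) [DecidablePred (fun x : Fin n => x.val < t)] :
    (Finset.univ.filter (fun x : Fin n => x.val < t)).card = t := by
  classical
  have : (Finset.univ.filter (fun x : Fin n => x.val < t)) =
      Finset.image (Fin.castLE h) Finset.univ := by
    ext x
    simp only [Finset.mem_filter, Finset.mem_univ, true_and, Finset.mem_image]
    constructor
    · intro hx; exact ⟨⟨x.val, hx⟩, rfl⟩
    · rintro ⟨y, rfl⟩; exact y.isLt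
  rw [this, Finset.card_image_of_injective _ (Fin.castLE_injective h), Finset.card_univ,
    Fintype.card_fin]

/-- Proposition (matching number construction): for a tree `T` on `k ≥ 4` vertices and
`n ≥ k`, `ex_c(n,T) ≥ (ν(T)-1)(n-ν(T)+1) + C(ν(T)-1, 2)`. -/
theorem exConn_ge_of_matchingNumber {V : Type*} [Fintype V] (T : SimpleGraph V) (k : ℕ)
    (hk : 4 ≤ k) (hcard : Fintype.card V = k) (hT : T.IsTree) (n : ℕ) (hn : k ≤ n) :
    (matchingNumber T - 1) * (n - matchingNumber T + 1) + (matchingNumber T - 1).choose 2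
      ≤ exConn n T := by
  classical
  set ν := matchingNumber T with hνdef
  by_cases hν1 : ν ≤ 1
  · have h0 : ν - 1 = 0 := by omega
    rw [h0]
    simp
  push_neg at hν1
  -- obtain a maximum matching
  have hSne : ({m | ∃ M : T.Subgraph, M.IsMatching ∧ m = M.edgeSet.ncard}).Nonempty := by
    refine ⟨0, ⊥, ?_, ?_⟩
    · intro v hv
      simp [Subgraph.verts_bot] at hv
    · simp [Subgraph.edgeSet_bot]
  have hSbdd : BddAbove {m | ∃ M : T.Subgraph, M.IsMatching ∧ m = M.edgeSet.ncard} := by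
    refine ⟨Nat.card (Sym2 V), ?_⟩
    rintro m ⟨M, -, rfl⟩
    calc M.edgeSet.ncard ≤ (Set.univ : Set (Sym2 V)).ncard :=
          Set.ncard_le_ncard (Set.subset_univ _) Set.finite_univ
      _ = Nat.card (Sym2 V) := Set.ncard_univ _
  obtain ⟨M, hM, hMcard⟩ := Nat.sSup_mem hSne hSbdd
  have hMν : ν = M.edgeSet.ncard := hMcard
  -- ν ≤ k - 1
  have hedges : T.edgeSet.ncard = k - 1 := by
    have h1 := hT.card_edgeFinset
    rw [hcard] at h1
    rw [Set.ncard_eq_toFinset_card']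
    have : T.edgeSet.toFinset = T.edgeFinset := by
      simp [edgeFinset]
    rw [this]
    omega
  have hνk : ν ≤ k - 1 := by
    have : M.edgeSet.ncard ≤ T.edgeSet.ncard :=
      Set.ncard_le_ncard M.edgeSet_subset (T.edgeSet.toFinite)
    omega
  set t := ν - 1 with htdef
  have hνt : ν = t + 1 := by omega
  have htn : t ≤ n := by omega
  have ht1 : 1 ≤ t := by omega
  have hn0 : 0 < n := by omega
  -- the extremal graph: clique on `t` vertices joined to everything
  set G : SimpleGraph (Fin n) :=
    { Adj := fun v w => v ≠ w ∧ (v.val < t ∨ w.val < t)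
      symm := ⟨by rintro v w ⟨h1, h2⟩; exact ⟨h1.symm, h2.symm⟩⟩
      loopless := ⟨fun v h => h.1 rfl⟩ } with hGdef
  have hAdj : ∀ v w : Fin n, G.Adj v w ↔ v ≠ w ∧ (v.val < t ∨ w.val < t) := fun _ _ => Iff.rfl
  -- connectivity
  have hGconn : G.Connected := by
    rw [connected_iff]
    refine ⟨?_, ⟨⟨0, hn0⟩⟩⟩
    have key : ∀ w : Fin n, w ≠ ⟨0, hn0⟩ → G.Adj ⟨0, hn0⟩ w := by
      intro w hw
      exact ⟨fun h => hw h.symm, Or.inl ht1⟩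
    intro u v
    by_cases hu : u = ⟨0, hn0⟩
    · by_cases hv : v = ⟨0, hn0⟩
      · rw [hu, hv]
      · rw [hu]; exact (key v hv).reachable
    · by_cases hv : v = ⟨0, hn0⟩
      · rw [hv]; exact (key u hu).reachable.symm
      · exact ((key u hu).reachable.symm).trans (key v hv).reachable
  -- freeness
  have hVne : Nonempty V := by
    rw [← Fintype.card_pos_iff]; omega
  have hfree : ¬ ContainsCopy T G := by
    rintro ⟨f, hf⟩
    have hchoice : ∀ e ∈ M.edgeSet, ∃ a b : V, e = s(a, b) ∧ M.Adj a b ∧ (f a).val < t := by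
      intro e he
      induction e with
      | h a b =>
        rw [Subgraph.mem_edgeSet] at he
        have hG := hf (M.adj_sub he)
        rcases hG.2 with h | h
        · exact ⟨a, b, rfl, he, h⟩
        · exact ⟨b, a, Sym2.eq_swap, he.symm, h⟩
    choose g1 g2 hg1 hg2 hg3 using hchoice
    have hle : M.edgeSet.ncard ≤ ({x : Fin n | x.val < t}).ncard := by
      refine Set.ncard_le_ncard_of_injOn
        (fun e => if h : e ∈ M.edgeSet then f (g1 e h) else f (Classical.arbitrary V))
        ?_ ?_ (Set.toFinite _)
      · intro e he
        simp only [dif_pos he]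
        exact hg3 e he
      · intro e1 h1 e2 h2 heq
        simp only [dif_pos h1, dif_pos h2] at heq
        have hv : g1 e1 h1 = g1 e2 h2 := f.injective heq
        have hA1 : M.Adj (g1 e1 h1) (g2 e1 h1) := hg2 e1 h1
        have hA2 : M.Adj (g1 e2 h2) (g2 e2 h2) := hg2 e2 h2
        rw [hv] at hA1
        have huniq := hM (M.edge_vert hA1)
        have hb : g2 e1 h1 = g2 e2 h2 := huniq.unique hA1 hA2
        rw [hg1 e1 h1, hg1 e2 h2, hv, hb]
    have hcardt : ({x : Fin n | x.val < t}).ncard = t := by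
      rw [Set.ncard_eq_toFinset_card']
      rw [Set.toFinset_setOf]
      exact aux_card_filter_lt htn
    omega
  -- edge count
  have hdeg1 : ∀ v : Fin n, v.val < t → G.degree v = n - 1 := by
    intro v hv
    rw [degree, neighborFinset_eq_filter]
    have : Finset.univ.filter (G.Adj v) = Finset.univ.filter (fun w => w ≠ v) := by
      apply Finset.filter_congr
      intro w _
      constructor
      · intro h; exact h.1.symm
      · intro h; exact ⟨fun hh => h hh.symm, Or.inl hv⟩
    rw [this, Finset.filter_ne', Finset.card_erase_of_mem (Finset.mem_univ v),
      Finset.card_univ, Fintype.card_fin]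
  have hdeg2 : ∀ v : Fin n, ¬ v.val < t → G.degree v = t := by
    intro v hv
    rw [degree, neighborFinset_eq_filter]
    have : Finset.univ.filter (G.Adj v) = Finset.univ.filter (fun w : Fin n => w.val < t) := by
      apply Finset.filter_congr
      intro w _
      constructor
      · intro h
        rcases h.2 with h' | h'
        · exact absurd h' hv
        · exact h'
      · intro h
        refine ⟨fun hh => ?_, Or.inr h⟩
        rw [hh] at hv; exact hv h
    rw [this]
    exact aux_card_filter_lt htn
  have hsum : ∑ v : Fin n, G.degree v = t * (n - 1) + (n - t) * t := by
    rw [← Finset.sum_filter_add_sum_filter_not Finset.univ (fun v : Fin n => v.val < t)]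
    rw [Finset.sum_congr rfl (fun v hv => hdeg1 v (Finset.mem_filter.mp hv).2),
      Finset.sum_congr rfl (fun v hv => hdeg2 v (Finset.mem_filter.mp hv).2),
      Finset.sum_const, Finset.sum_const, smul_eq_mul, smul_eq_mul]
    have h1 : (Finset.univ.filter (fun v : Fin n => v.val < t)).card = t :=
      aux_card_filter_lt htn
    have h2 : (Finset.univ.filter (fun v : Fin n => ¬ v.val < t)).card = n - t := by
      have := Finset.card_filter_add_card_filter_not
        (s := (Finset.univ : Finset (Fin n))) (p := fun v : Fin n => v.val < t)
      rw [Finset.card_univ, Fintype.card_fin, h1] at this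
      omega
    rw [h1, h2]
  have hq : 2 * t.choose 2 = t * (t - 1) := by
    rw [Nat.choose_two_right]
    have heven : Even (t * (t - 1)) := by
      have : t * (t - 1) = (t - 1) * ((t - 1) + 1) := by
        rw [Nat.sub_add_cancel ht1, mul_comm]
      rw [this]
      exact Nat.even_mul_succ_self _
    exact Nat.two_mul_div_two_of_even heven
  have hcount : G.edgeSet.ncard = t * (n - t) + t.choose 2 := by
    have hnc : G.edgeSet.ncard = G.edgeFinset.card := by
      rw [Set.ncard_eq_toFinset_card']
      simp [edgeFinset]
    have h2 : 2 * G.edgeFinset.card = t * (n - 1) + (n - t) * t := by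
      rw [← G.sum_degrees_eq_twice_card_edges, hsum]
    have harith : t * (n - 1) + (n - t) * t = 2 * (t * (n - t) + t.choose 2) := by
      have h5 : n - 1 = (n - t) + (t - 1) := by omega
      calc t * (n - 1) + (n - t) * t = t * ((n - t) + (t - 1)) + (n - t) * t := by rw [h5]
        _ = 2 * (t * (n - t)) + t * (t - 1) := by ring
        _ = 2 * (t * (n - t)) + 2 * t.choose 2 := by rw [hq]
        _ = 2 * (t * (n - t) + t.choose 2) := by ring
    rw [hnc]
    omega
  -- conclude
  have hbdd2 : BddAbove {m | ∃ G : SimpleGraph (Fin n),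
      G.Connected ∧ ¬ ContainsCopy T G ∧ m = G.edgeSet.ncard} := by
    refine ⟨Nat.card (Sym2 (Fin n)), ?_⟩
    rintro m ⟨H, -, -, rfl⟩
    calc H.edgeSet.ncard ≤ (Set.univ : Set (Sym2 (Fin n))).ncard :=
          Set.ncard_le_ncard (Set.subset_univ _) Set.finite_univ
      _ = Nat.card (Sym2 (Fin n)) := Set.ncard_univ _
  have hmem : (ν - 1) * (n - ν + 1) + (ν - 1).choose 2 ∈ {m | ∃ G : SimpleGraph (Fin n),
      G.Connected ∧ ¬ ContainsCopy T G ∧ m = G.edgeSet.ncard} := by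
    refine ⟨G, hGconn, hfree, ?_⟩
    rw [hcount]
    have h6 : n - ν + 1 = n - t := by omega
    rw [h6, ← htdef]
  exact le_csSup hbdd2 hmem
end

section
/- Let T be a tree on k ≥ 4 vertices whose (unique) bipartition consists of classes of sizes a and b with a ≤ b. Then for every n ≥ k, ex_c(n,T) ≥ (a−1)(n−a+1). -/
set_option maxHeartbeats 1000000


open SimpleGraph

/-- Proposition (bipartition construction): if the bipartition of a tree `T` on `k ≥ 4`
vertices has classes of sizes `a ≤ b`, then for `n ≥ k`, `ex_c(n,T) ≥ (a-1)(n-a+1)`. -/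
theorem exConn_ge_of_bipartition {V : Type*} [Fintype V] [DecidableEq V]
    (T : SimpleGraph V) (k a b : ℕ) (hk : 4 ≤ k) (hcard : Fintype.card V = k)
    (hT : T.IsTree) (A B : Finset V) (hunion : A ∪ B = Finset.univ) (hdisj : Disjoint A B)
    (hA : ∀ x ∈ A, ∀ y ∈ A, ¬ T.Adj x y) (hB : ∀ x ∈ B, ∀ y ∈ B, ¬ T.Adj x y)
    (ha : A.card = a) (hb : B.card = b) (hab : a ≤ b)
    (n : ℕ) (hn : k ≤ n) :
    (a - 1) * (n - a + 1) ≤ exConn n T := by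
  classical
  rcases Nat.lt_or_ge a 2 with ha2 | ha2
  · have h0 : a - 1 = 0 := by omega
    simp [h0]
  -- main case: a ≥ 2
  have hk' : a + b = k := by
    have h1 := Finset.card_union_of_disjoint hdisj
    rw [hunion, Finset.card_univ, hcard, ha, hb] at h1
    omega
  set s : ℕ := a - 1 with hs
  have hsn : s < n := by omega
  have hs1 : 1 ≤ s := by omega
  -- the small side
  have hrange : ∀ m ∈ Finset.range s, m < n := fun m hm =>
    lt_of_lt_of_le (Finset.mem_range.mp hm) hsn.le
  set S : Finset (Fin n) := (Finset.range s).attachFin hrange with hSdef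
  have hmemS : ∀ x : Fin n, x ∈ S ↔ (x : ℕ) < s := by
    intro x
    rw [hSdef, Finset.mem_attachFin, Finset.mem_range]
  have hScard : S.card = s := by
    rw [hSdef, Finset.card_attachFin, Finset.card_range]
  have hScompl : Sᶜ.card = n - s := by
    rw [Finset.card_compl, hScard, Fintype.card_fin]
  -- the graph
  let G : SimpleGraph (Fin n) :=
    { Adj := fun x y => ((x : ℕ) < s) ≠ ((y : ℕ) < s)
      symm := ⟨fun x y h => Ne.symm h⟩
      loopless := ⟨fun x h => h rfl⟩ }
  have hGadj : ∀ x y : Fin n, G.Adj x y ↔ ((x : ℕ) < s) ≠ ((y : ℕ) < s) := fun _ _ => Iff.rfl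
  -- edge count lower bound
  set E : Finset (Sym2 (Fin n)) := (S ×ˢ Sᶜ).image (fun p => Sym2.mk p.1 p.2) with hEdef
  have hEcard : E.card = s * (n - s) := by
    rw [hEdef, Finset.card_image_of_injOn, Finset.card_product, hScard, hScompl]
    intro p hp q hq hpq
    simp only [Finset.mem_coe, Finset.mem_product, Finset.mem_compl] at hp hq
    rw [Sym2.mk_eq_mk_iff] at hpq
    rcases hpq with h | h
    · exact h
    · exfalso
      have h1 : p.1 = q.2 := congrArg Prod.fst h
      rw [hmemS] at hp hq
      exact hq.2 (by rw [hmemS, ← h1]; exact hp.1)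
  have hEsub : (↑E : Set (Sym2 (Fin n))) ⊆ G.edgeSet := by
    intro e he
    rw [hEdef] at he
    simp only [Finset.coe_image, Set.mem_image, Finset.mem_coe, Finset.mem_product] at he
    obtain ⟨p, ⟨hp1, hp2⟩, rfl⟩ := he
    rw [Finset.mem_compl] at hp2
    rw [hmemS] at hp1 hp2
    exact (fun h => hp2 (h ▸ hp1) : G.Adj p.1 p.2)
  have hedge : s * (n - s) ≤ G.edgeSet.ncard := by
    calc s * (n - s) = E.card := hEcard.symm
      _ = (↑E : Set (Sym2 (Fin n))).ncard := (Set.ncard_coe_finset E).symm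
      _ ≤ G.edgeSet.ncard := Set.ncard_le_ncard hEsub (Set.toFinite _)
  -- connectivity
  haveI : Nonempty (Fin n) := ⟨⟨0, by omega⟩⟩
  have hGconn : G.Connected := by
    refine ⟨fun x y => ?_⟩
    by_cases hxy : ((x : ℕ) < s) = ((y : ℕ) < s)
    · by_cases hxs : (x : ℕ) < s
      · have hys : (y : ℕ) < s := by rw [← hxy] at *; exact hxs
        let z : Fin n := ⟨s, hsn⟩
        have hz : ¬ ((z : ℕ) < s) := lt_irrefl s
        have h1 : G.Adj x z := fun h => hz (h ▸ hxs)
        have h2 : G.Adj z y := fun h => hz (h.symm ▸ hys)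
        exact (h1.reachable).trans h2.reachable
      · have hys : ¬ ((y : ℕ) < s) := by rw [← hxy]; exact hxs
        let z : Fin n := ⟨0, by omega⟩
        have hz : (z : ℕ) < s := hs1
        have h1 : G.Adj x z := fun h => hxs (h.symm ▸ hz)
        have h2 : G.Adj z y := fun h => hys (h ▸ hz)
        exact (h1.reachable).trans h2.reachable
    · exact (Adj.reachable (hxy : G.Adj x y))
  -- T-freeness
  have hfree : ¬ ContainsCopy T G := by
    rintro ⟨f, hf⟩
    set A' : Finset V := Finset.univ.filter (fun v => ((f v : Fin n) : ℕ) < s) with hA'def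
    have hA'mem : ∀ v : V, v ∈ A' ↔ ((f v : Fin n) : ℕ) < s := by
      intro v; rw [hA'def, Finset.mem_filter]; simp
    have hA'card : A'.card ≤ s := by
      have h1 : A'.image f ⊆ S := by
        intro x hx
        obtain ⟨v, hv, rfl⟩ := Finset.mem_image.mp hx
        rw [hmemS]
        exact (hA'mem v).mp hv
      calc A'.card = (A'.image f).card := (Finset.card_image_of_injective _ f.injective).symm
        _ ≤ S.card := Finset.card_le_card h1
        _ = s := hScard
    have hAB : ∀ v : V, v ∉ A → v ∈ B := by
      intro v hv
      have hv2 : v ∈ A ∪ B := hunion ▸ Finset.mem_univ v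
      rcases Finset.mem_union.mp hv2 with h | h
      · exact absurd h hv
      · exact h
    have fact1 : ∀ u v : V, T.Adj u v → (u ∈ A ↔ v ∉ A) := by
      intro u v huv
      constructor
      · intro hu hv; exact hA u hu v hv huv
      · intro hv; by_contra hu; exact hB u (hAB u hu) v (hAB v hv) huv
    have fact2 : ∀ u v : V, T.Adj u v → (u ∈ A' ↔ v ∉ A') := by
      intro u v huv
      have hne := hf huv
      rw [hGadj] at hne
      rw [hA'mem, hA'mem]
      by_cases h1 : ((f u : Fin n) : ℕ) < s <;> by_cases h2 : ((f v : Fin n) : ℕ) < s <;>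
        simp [h1, h2] at hne ⊢
    have walkstep : ∀ u v : V, T.Reachable u v →
        ((u ∈ A ↔ u ∈ A') ↔ (v ∈ A ↔ v ∈ A')) := by
      intro u v h
      obtain ⟨w⟩ := h
      induction w with
      | nil => exact Iff.rfl
      | cons h w ih =>
        have h1 := fact1 _ _ h
        have h2 := fact2 _ _ h
        refine Iff.trans ?_ ih
        tauto
    obtain ⟨v₀⟩ : Nonempty V := Fintype.card_pos_iff.mp (by omega)
    have hvAB : ∀ v : V, v ∈ B ↔ v ∉ A := by
      intro v
      constructor
      · intro h1 h2; exact Finset.disjoint_left.mp hdisj h2 h1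
      · exact hAB v
    by_cases hc : v₀ ∈ A ↔ v₀ ∈ A'
    · have hAA' : A = A' := by
        ext v
        have hw := walkstep v₀ v (hT.isConnected.preconnected v₀ v)
        tauto
      rw [← hAA'] at hA'card
      omega
    · have hBA' : B = A' := by
        ext v
        have hw := walkstep v₀ v (hT.isConnected.preconnected v₀ v)
        have := hvAB v
        have := hvAB v₀
        tauto
      rw [← hBA'] at hA'card
      omega
  -- conclude
  have hmem : G.edgeSet.ncard ∈
      {m | ∃ G' : SimpleGraph (Fin n), G'.Connected ∧ ¬ ContainsCopy T G' ∧
        m = G'.edgeSet.ncard} := ⟨G, hGconn, hfree, rfl⟩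
  have hbdd : BddAbove {m | ∃ G' : SimpleGraph (Fin n), G'.Connected ∧
      ¬ ContainsCopy T G' ∧ m = G'.edgeSet.ncard} := by
    refine ⟨Fintype.card (Sym2 (Fin n)), ?_⟩
    rintro m ⟨G', _, _, rfl⟩
    have h := Set.ncard_le_ncard (Set.subset_univ G'.edgeSet) Set.finite_univ
    simpa [Set.ncard_univ, Nat.card_eq_fintype_card] using h
  have heq : (a - 1) * (n - a + 1) = s * (n - s) := by
    have : n - a + 1 = n - s := by omega
    rw [this]
  calc (a - 1) * (n - a + 1) = s * (n - s) := heq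
    _ ≤ G.edgeSet.ncard := hedge
    _ ≤ exConn n T := le_csSup hbdd hmem
end

section
/- Let T be a tree on k ≥ 4 vertices that is not a path, and for a vertex v of T let m_{T,2}(v) be the sum of the numbers of vertices of the two largest connected components of T − v; set m_2(T) = min over vertices v of m_{T,2}(v). Then for every n ≥ k, ex_c(n,T) ≥ ⌊n/(k−m_2(T))⌋ · (1 + C(k−m_2(T), 2)), where C(m,2) denotes the binomial coefficient m choose 2. -/
open SimpleGraph

/-- `G` is a path graph: it has a Hamiltonian path and no other edges.
(For trees, having a Hamiltonian path is equivalent to being a path.) -/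
def IsPathGraph {V : Type*} (G : SimpleGraph V) : Prop :=
  ∃ (u v : V) (p : G.Walk u v), p.IsPath ∧ ∀ w, w ∈ p.support

/-- `m_{T,2}(v)`: the sum of the numbers of vertices of the two largest connected
components of `T - v` (realised as the largest possible total size of at most two
connected components of `T - v`). -/
noncomputable def twoLargestCompDelVert {V : Type*} (T : SimpleGraph V) (v : V) : ℕ :=
  sSup {m | ∃ C : Finset ((T.induce {u | u ≠ v}).ConnectedComponent),
    C.card ≤ 2 ∧ m = ∑ c ∈ C, c.supp.ncard}

/-- `m_2(T) = min_{v ∈ V(T)} m_{T,2}(v)`. -/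
noncomputable def branchingNumber2 {V : Type*} (T : SimpleGraph V) : ℕ :=
  sInf (Set.range fun v => twoLargestCompDelVert T v)

namespace ExConnAux

/-- division characterization -/
lemma div_eq_iff_aux {s : ℕ} (hs : 0 < s) (c y : ℕ) :
    y / s = c ↔ c * s ≤ y ∧ y < c * s + s := by
  constructor
  · rintro rfl
    have h1 := Nat.div_add_mod y s
    have h2 := Nat.mod_lt y hs
    have h3 : s * (y / s) = (y / s) * s := mul_comm _ _
    omega
  · rintro ⟨h1, h2⟩
    have := Nat.div_eq_of_lt_le h1 (by rw [Nat.succ_mul]; omega)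
    exact this

lemma sum_supp {α : Type*} [Fintype α] (H : SimpleGraph α) [Fintype H.ConnectedComponent] :
    ∑ c : H.ConnectedComponent, c.supp.ncard = Fintype.card α := by
  classical
  have h1 : ∀ c : H.ConnectedComponent, c.supp.ncard = c.supp.toFinset.card := by
    intro c; exact Set.ncard_eq_toFinset_card' _
  rw [Finset.sum_congr rfl (fun c _ => h1 c)]
  have hdisj : ∀ c ∈ (Finset.univ : Finset H.ConnectedComponent), ∀ c' ∈ Finset.univ,
      c ≠ c' → Disjoint c.supp.toFinset c'.supp.toFinset := by
    intro c _ c' _ hne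
    rw [Finset.disjoint_left]
    intro a ha ha'
    rw [Set.mem_toFinset, ConnectedComponent.mem_supp_iff] at ha ha'
    exact hne (ha ▸ ha')
  rw [← Finset.card_biUnion hdisj]
  have : (Finset.univ.biUnion fun c : H.ConnectedComponent => c.supp.toFinset) = Finset.univ := by
    ext a
    simp only [Finset.mem_biUnion, Finset.mem_univ, true_iff, iff_true]
    exact ⟨H.connectedComponentMk a, trivial, by
      rw [Set.mem_toFinset, ConnectedComponent.mem_supp_iff]⟩
  rw [this, Finset.card_univ]


/-- Every connected component of `T - v` contains a neighbour of `v`. -/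
lemma exists_adj_aux {V : Type*} {T : SimpleGraph V} {v : V} :
    ∀ {a b : V} (_ : T.Walk a b) (_ : b = v) (ha : a ≠ v),
      ∃ u₀ : ↥{u : V | u ≠ v}, T.Adj ↑u₀ v ∧
        (T.induce {u : V | u ≠ v}).Reachable ⟨a, ha⟩ u₀ := by
  intro a b p
  induction p with
  | nil => intro hb ha; exact absurd hb ha
  | @cons a w b h q ih =>
    intro hb ha
    by_cases hw : w = v
    · exact ⟨⟨a, ha⟩, hw ▸ h, Reachable.refl _⟩
    · obtain ⟨u₀, h1, h2⟩ := ih hb hw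
      have hadj : (T.induce {u : V | u ≠ v}).Adj ⟨a, ha⟩ ⟨w, hw⟩ := h
      exact ⟨u₀, h1, (hadj.reachable).trans h2⟩

lemma exists_adj_rep {V : Type*} {T : SimpleGraph V} (hconn : T.Connected) {v : V}
    (c : (T.induce {u | u ≠ v}).ConnectedComponent) :
    ∃ u₀ : ↥{u : V | u ≠ v}, T.Adj ↑u₀ v ∧
      (T.induce {u | u ≠ v}).connectedComponentMk u₀ = c := by
  obtain ⟨w, rfl⟩ := c.exists_rep
  obtain ⟨p⟩ := hconn.preconnected ↑w v
  obtain ⟨u₀, h1, h2⟩ := exists_adj_aux p rfl w.2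
  exact ⟨u₀, h1, (ConnectedComponent.eq.mpr h2).symm⟩

lemma card_le_of_emb {V W : Type*} [Fintype V] {T : SimpleGraph V} (hconn : T.Connected)
    {G : SimpleGraph W} (φ : V ↪ W) (hφ : ∀ ⦃a b : V⦄, T.Adj a b → G.Adj (φ a) (φ b))
    (v : V) (S : Set W) (hSfin : S.Finite) (Tok : Finset W) (hTok : Tok.card ≤ 2)
    (hA4 : ∀ y, G.Adj (φ v) y → y ∈ S ∨ y ∈ Tok)
    (hA5 : ∀ y z, y ∈ S → G.Adj y z → z = φ v ∨ z ∈ S ∨ z ∈ Tok) :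
    Fintype.card V - 1 ≤ twoLargestCompDelVert T v + S.ncard := by
  classical
  haveI : Fintype ((T.induce {u : V | u ≠ v}).ConnectedComponent) := by
    have : Finite ((T.induce {u : V | u ≠ v}).ConnectedComponent) := Quot.finite _
    exact Fintype.ofFinite _
  -- walk confinement
  have key : ∀ {a b : ↥{u : V | u ≠ v}} (p : (T.induce {u : V | u ≠ v}).Walk a b),
      G.Adj (φ v) (φ ↑b) →
      φ ↑a ∈ S ∨ ∃ z : ↥{u : V | u ≠ v},
        (T.induce {u : V | u ≠ v}).Reachable z b ∧ φ ↑z ∈ Tok := by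
    intro a b p
    induction p with
    | nil =>
      intro hb
      rcases hA4 _ hb with h | h
      · exact Or.inl h
      · exact Or.inr ⟨_, Reachable.refl _, h⟩
    | @cons a a' b h q ih =>
      intro hb
      rcases ih hb with h' | ⟨z, hz1, hz2⟩
      · have hadj : G.Adj (φ ↑a') (φ ↑a) := hφ (h.symm : T.Adj ↑a' ↑a)
        rcases hA5 _ _ h' hadj with h'' | h'' | h''
        · exact absurd (φ.injective h'') a.2
        · exact Or.inl h''
        · exact Or.inr ⟨a, ⟨Walk.cons h q⟩, h''⟩
      · exact Or.inr ⟨z, hz1, hz2⟩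
  set P : (T.induce {u : V | u ≠ v}).ConnectedComponent → Prop :=
    fun c => ∃ z : ↥{u : V | u ≠ v},
      (T.induce {u : V | u ≠ v}).connectedComponentMk z = c ∧ φ ↑z ∈ Tok with hP
  set CB : Finset ((T.induce {u : V | u ≠ v}).ConnectedComponent) :=
    Finset.univ.filter P with hCBdef
  have hCBcard : CB.card ≤ 2 := by
    refine le_trans (Finset.card_le_card_of_injOn
      (fun c => if h : P c then φ ↑h.choose else φ v) ?_ ?_) hTok
    · intro c hc
      have hc' : P c := (Finset.mem_filter.mp hc).2
      show (if h : P c then φ ↑h.choose else φ v) ∈ Tok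
      rw [dif_pos hc']
      exact hc'.choose_spec.2
    · intro c hc c' hc' hf
      have h1 : P c := (Finset.mem_filter.mp (Finset.mem_coe.mp hc)).2
      have h2 : P c' := (Finset.mem_filter.mp (Finset.mem_coe.mp hc')).2
      simp only [dif_pos h1, dif_pos h2] at hf
      have h3 : (h1.choose : ↥{u : V | u ≠ v}) = h2.choose := Subtype.ext (φ.injective hf)
      rw [← h1.choose_spec.1, ← h2.choose_spec.1, h3]
  have hgood : ∀ c, ¬ P c → ∀ u, u ∈ ConnectedComponent.supp c → φ ↑u ∈ S := by
    intro c hcP u hu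
    obtain ⟨u₀, hadj, hmk⟩ := exists_adj_rep hconn c
    have hreach : (T.induce {u : V | u ≠ v}).Reachable u u₀ := by
      rw [ConnectedComponent.mem_supp_iff] at hu
      exact ConnectedComponent.eq.mp (hu.trans hmk.symm)
    obtain ⟨p⟩ := hreach
    rcases key p (hφ hadj.symm) with h | ⟨z, hz1, hz2⟩
    · exact h
    · exact absurd ⟨z, (ConnectedComponent.eq.mpr hz1).trans hmk, hz2⟩ hcP
  have htot := sum_supp (T.induce {u : V | u ≠ v})
  have hIcard : Fintype.card ↥{u : V | u ≠ v} = Fintype.card V - 1 := by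
    have e : ↥{u : V | u ≠ v} ≃ {u : V // ¬ u = v} := Equiv.subtypeEquivRight (fun x => Iff.rfl)
    rw [Fintype.card_congr e, Fintype.card_subtype_compl, Fintype.card_subtype_eq]
  have hsplit := Finset.sum_filter_add_sum_filter_not Finset.univ P
      (fun c => (ConnectedComponent.supp c).ncard)
  have hgs : ∑ c ∈ Finset.univ.filter (fun c => ¬ P c),
      (ConnectedComponent.supp c).ncard ≤ S.ncard := by
    have h1 : ∀ c ∈ Finset.univ.filter (fun c => ¬ P c),
        (ConnectedComponent.supp c).ncard = (ConnectedComponent.supp c).toFinset.card :=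
      fun c _ => Set.ncard_eq_toFinset_card' _
    rw [Finset.sum_congr rfl h1]
    have hdisj : ∀ c ∈ Finset.univ.filter (fun c => ¬ P c),
        ∀ c' ∈ Finset.univ.filter (fun c => ¬ P c), c ≠ c' →
        Disjoint (ConnectedComponent.supp c).toFinset (ConnectedComponent.supp c').toFinset := by
      intro c _ c' _ hne
      rw [Finset.disjoint_left]
      intro a ha ha'
      rw [Set.mem_toFinset, ConnectedComponent.mem_supp_iff] at ha ha'
      exact hne (ha ▸ ha')
    rw [← Finset.card_biUnion hdisj]
    set B := (Finset.univ.filter (fun c => ¬ P c)).biUnion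
      (fun c => (ConnectedComponent.supp c).toFinset) with hB
    have hinj : Set.InjOn (fun u : ↥{u : V | u ≠ v} => φ ↑u) ↑B := by
      intro a _ b _ hab
      exact Subtype.ext (φ.injective hab)
    have hsub : B.image (fun u : ↥{u : V | u ≠ v} => φ ↑u) ⊆ hSfin.toFinset := by
      intro y hy
      rw [Finset.mem_image] at hy
      obtain ⟨u, hu, rfl⟩ := hy
      rw [hB, Finset.mem_biUnion] at hu
      obtain ⟨c, hc, hu⟩ := hu
      rw [Set.Finite.mem_toFinset]
      exact hgood c (Finset.mem_filter.mp hc).2 u (Set.mem_toFinset.mp hu)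
    calc B.card = (B.image (fun u : ↥{u : V | u ≠ v} => φ ↑u)).card :=
          (Finset.card_image_of_injOn hinj).symm
      _ ≤ hSfin.toFinset.card := Finset.card_le_card hsub
      _ = S.ncard := (Set.ncard_eq_toFinset_card _ hSfin).symm
  have hbs : ∑ c ∈ CB, (ConnectedComponent.supp c).ncard ≤ twoLargestCompDelVert T v := by
    have hbdd : BddAbove {m | ∃ C : Finset ((T.induce {u | u ≠ v}).ConnectedComponent),
        C.card ≤ 2 ∧ m = ∑ c ∈ C, c.supp.ncard} := by
      refine ⟨Fintype.card ↥{u : V | u ≠ v}, ?_⟩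
      rintro m ⟨C, _, rfl⟩
      calc ∑ c ∈ C, (ConnectedComponent.supp c).ncard
          ≤ ∑ c : (T.induce {u : V | u ≠ v}).ConnectedComponent,
              (ConnectedComponent.supp c).ncard :=
            Finset.sum_le_sum_of_subset (Finset.subset_univ C)
        _ = _ := sum_supp _
    exact le_csSup hbdd ⟨CB, hCBcard, rfl⟩
  calc Fintype.card V - 1 = Fintype.card ↥{u : V | u ≠ v} := hIcard.symm
    _ = ∑ c : (T.induce {u : V | u ≠ v}).ConnectedComponent,
          (ConnectedComponent.supp c).ncard := htot.symm
    _ = ∑ c ∈ CB, (ConnectedComponent.supp c).ncard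
        + ∑ c ∈ Finset.univ.filter (fun c => ¬ P c),
            (ConnectedComponent.supp c).ncard := hsplit.symm
    _ ≤ twoLargestCompDelVert T v + S.ncard := Nat.add_le_add hbs hgs

lemma interior_two_nbrs {V : Type*} {T : SimpleGraph V} {u w y : V} {p : T.Walk u w}
    (hp : p.IsPath) (hy : y ∈ p.support) (hyu : y ≠ u) (hyw : y ≠ w) :
    ∃ n₁ n₂, n₁ ≠ n₂ ∧ T.Adj y n₁ ∧ T.Adj y n₂ ∧ n₁ ∈ p.support ∧ n₂ ∈ p.support := by
  classical
  set p₁ := p.takeUntil y hy with hp₁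
  set p₂ := p.dropUntil y hy with hp₂
  have h₁ : ¬ p₁.reverse.Nil := Walk.not_nil_of_ne hyu
  have h₂ : ¬ p₂.Nil := Walk.not_nil_of_ne hyw
  refine ⟨p₁.reverse.getVert 1, p₂.getVert 1, ?_, Walk.adj_snd h₁,
    Walk.adj_snd h₂, ?_, ?_⟩
  · -- distinctness via nodup of p.support
    have hnd : p.support.Nodup := hp.support_nodup
    have hspec : p₁.append p₂ = p := p.take_spec hy
    have hsup : p.support = p₁.support ++ p₂.support.tail := by
      rw [← hspec, Walk.support_append]
    rw [hsup] at hnd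
    have hdisj := (List.nodup_append.mp hnd).2.2
    have hmem1 : p₁.reverse.getVert 1 ∈ p₁.support := by
      have := Walk.start_mem_support (p₁.reverse.tail)
      have h' := Walk.support_tail_of_not_nil _ h₁
      rw [h'] at this
      have := List.mem_of_mem_tail this
      rwa [Walk.support_reverse, List.mem_reverse] at this
    have hmem2 : p₂.getVert 1 ∈ p₂.support.tail := by
      have := Walk.start_mem_support (p₂.tail)
      have h' := Walk.support_tail_of_not_nil _ h₂
      rwa [h'] at this
    intro hne
    exact hdisj _ hmem1 _ hmem2 hne
  · have hmem1 : p₁.reverse.getVert 1 ∈ p₁.support := by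
      have := Walk.start_mem_support (p₁.reverse.tail)
      have h' := Walk.support_tail_of_not_nil _ h₁
      rw [h'] at this
      have := List.mem_of_mem_tail this
      rwa [Walk.support_reverse, List.mem_reverse] at this
    exact p.support_takeUntil_subset hy hmem1
  · have hmem2 : p₂.getVert 1 ∈ p₂.support := by
      have := Walk.start_mem_support (p₂.tail)
      have h' := Walk.support_tail_of_not_nil _ h₂
      rw [h'] at this
      exact List.mem_of_mem_tail this
    exact p.support_dropUntil_subset hy hmem2

lemma hamPath_of_degree_le_two {V : Type*} [Fintype V] {T : SimpleGraph V}
    (hconn : T.Connected)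
    (hdeg : ∀ v a b c : V, T.Adj v a → T.Adj v b → T.Adj v c → a = b ∨ a = c ∨ b = c) :
    IsPathGraph T := by
  classical
  obtain ⟨v₀⟩ := hconn.nonempty
  set P : Set ℕ := {l | ∃ (u w : V) (p : T.Walk u w), p.IsPath ∧ p.support.length = l} with hPdef
  have hPne : P.Nonempty := ⟨1, v₀, v₀, Walk.nil, Walk.IsPath.nil, rfl⟩
  have hPbdd : BddAbove P := by
    refine ⟨Fintype.card V, ?_⟩
    rintro l ⟨a, b, q, hq, rfl⟩
    have := hq.length_lt
    rw [Walk.length_support]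
    omega
  obtain ⟨u, w, p, hp, hlen⟩ := Nat.sSup_mem hPne hPbdd
  refine ⟨u, w, p, hp, ?_⟩
  by_contra hall
  push_neg at hall
  obtain ⟨z, hz⟩ := hall
  have hmax : ∀ (a b : V) (q : T.Walk a b), q.IsPath → q.support.length ≤ p.support.length := by
    intro a b q hq
    rw [hlen]
    exact le_csSup hPbdd ⟨a, b, q, hq, rfl⟩
  have hextw : ∀ y, T.Adj w y → y ∈ p.support := by
    intro y hy
    by_contra hy'
    have hq : (Walk.cons hy.symm p.reverse).IsPath := by
      rw [Walk.cons_isPath_iff]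
      exact ⟨hp.reverse, by rwa [Walk.support_reverse, List.mem_reverse]⟩
    have := hmax _ _ _ hq
    rw [Walk.support_cons, List.length_cons, Walk.support_reverse, List.length_reverse] at this
    omega
  have hextu : ∀ y, T.Adj u y → y ∈ p.support := by
    intro y hy
    by_contra hy'
    have hq : (Walk.cons hy.symm p).IsPath := by
      rw [Walk.cons_isPath_iff]
      exact ⟨hp, hy'⟩
    have := hmax _ _ _ hq
    rw [Walk.support_cons, List.length_cons] at this
    omega
  have hcross : ∀ (a b : V) (q : T.Walk a b), a ∉ p.support → b ∈ p.support →
      ∃ y z', z' ∉ p.support ∧ y ∈ p.support ∧ T.Adj z' y := by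
    intro a b q
    induction q with
    | nil => intro h1 h2; exact absurd h2 h1
    | @cons a m b h q ih =>
      intro h1 h2
      by_cases hm : m ∈ p.support
      · exact ⟨m, a, h1, hm, h⟩
      · exact ih hm h2
  obtain ⟨y, z', hz', hy, hadj⟩ :=
    hcross z u (hconn.preconnected z u).some hz (Walk.start_mem_support p)
  by_cases hyu : y = u
  · exact hz' (hextu z' (by rw [hyu] at hadj; exact hadj.symm))
  by_cases hyw : y = w
  · exact hz' (hextw z' (by rw [hyw] at hadj; exact hadj.symm))
  obtain ⟨n₁, n₂, hne, h1, h2, hs1, hs2⟩ := interior_two_nbrs hp hy hyu hyw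
  rcases hdeg y z' n₁ n₂ hadj.symm h1 h2 with h | h | h
  · exact hz' (h ▸ hs1)
  · exact hz' (h ▸ hs2)
  · exact hne h

lemma branching_le {V : Type*} [Fintype V] {T : SimpleGraph V} (hT : T.IsTree)
    (hnp : ¬ IsPathGraph T) (hcard : 3 ≤ Fintype.card V) :
    branchingNumber2 T + 2 ≤ Fintype.card V := by
  classical
  by_contra hcon
  push_neg at hcon
  apply hnp
  apply hamPath_of_degree_le_two hT.isConnected
  intro v a b c hva hvb hvc
  by_contra habc
  push_neg at habc
  obtain ⟨hab, hac, hbc⟩ := habc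
  haveI : Fintype ((T.induce {u : V | u ≠ v}).ConnectedComponent) := by
    have : Finite ((T.induce {u : V | u ≠ v}).ConnectedComponent) := Quot.finite _
    exact Fintype.ofFinite _
  have hane : a ≠ v := fun h => T.irrefl (h ▸ hva)
  have hbne : b ≠ v := fun h => T.irrefl (h ▸ hvb)
  have hcne : c ≠ v := fun h => T.irrefl (h ▸ hvc)
  have hdist : ∀ (x y : V) (hx : x ≠ v) (hy : y ≠ v), T.Adj v x → T.Adj v y → x ≠ y →
      (T.induce {u : V | u ≠ v}).connectedComponentMk ⟨x, hx⟩ ≠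
      (T.induce {u : V | u ≠ v}).connectedComponentMk ⟨y, hy⟩ := by
    intro x y hx hy hvx hvy hxy hmk
    obtain ⟨pw⟩ := ConnectedComponent.eq.mp hmk
    let hom : T.induce {u : V | u ≠ v} →g T := ⟨Subtype.val, fun {α β} h => h⟩
    have hvsup : v ∉ (pw.map hom).support := by
      rw [Walk.support_map]
      intro hmem
      obtain ⟨⟨z, hz⟩, _, hzz⟩ := List.mem_map.mp hmem
      exact hz hzz
    set pA := (pw.map hom).toPath with hpA
    have hvA : v ∉ (pA : T.Walk x y).support := fun h =>
      hvsup (Walk.support_toPath_subset _ h)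
    have hpB : (Walk.cons hvx.symm (Walk.cons hvy Walk.nil)).IsPath := by
      rw [Walk.isPath_def]
      simp only [Walk.support_cons, Walk.support_nil]
      refine List.nodup_cons.mpr ⟨?_, List.nodup_cons.mpr ⟨?_, List.nodup_singleton _⟩⟩
      · intro h
        simp only [List.mem_cons, List.mem_singleton, List.not_mem_nil, or_false] at h
        rcases h with h | h
        · exact hx h
        · exact hxy h
      · intro h
        simp only [List.mem_singleton, List.not_mem_nil, or_false, List.mem_cons] at h
        exact hy h.symm
    have huniq := (isAcyclic_iff_path_unique.mp hT.IsAcyclic) pA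
      ⟨Walk.cons hvx.symm (Walk.cons hvy Walk.nil), hpB⟩
    have : v ∈ (pA : T.Walk x y).support := by
      rw [huniq]
      simp [Walk.support_cons]
    exact hvA this
  have hub : twoLargestCompDelVert T v ≤ Fintype.card V - 2 := by
    show sSup {m | ∃ C : Finset ((T.induce {u | u ≠ v}).ConnectedComponent),
      C.card ≤ 2 ∧ m = ∑ c ∈ C, c.supp.ncard} ≤ Fintype.card V - 2
    refine csSup_le ?_ ?_
    · exact ⟨0, ∅, by simp, by simp⟩
    rintro m ⟨C, hC2, rfl⟩
    set ca := (T.induce {u : V | u ≠ v}).connectedComponentMk ⟨a, hane⟩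
    set cb := (T.induce {u : V | u ≠ v}).connectedComponentMk ⟨b, hbne⟩
    set cc := (T.induce {u : V | u ≠ v}).connectedComponentMk ⟨c, hcne⟩
    have h3 : ({ca, cb, cc} : Finset _).card = 3 := by
      rw [Finset.card_insert_of_notMem (by
        simp only [Finset.mem_insert, Finset.mem_singleton]
        push_neg
        exact ⟨hdist a b hane hbne hva hvb hab, hdist a c hane hcne hva hvc hac⟩),
        Finset.card_insert_of_notMem (by
        simp only [Finset.mem_singleton]
        exact hdist b c hbne hcne hvb hvc hbc), Finset.card_singleton]
    have hc₀ : ∃ c₀, c₀ ∈ ({ca, cb, cc} : Finset _) ∧ c₀ ∉ C := by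
      by_contra hcc
      push_neg at hcc
      have hsub : ({ca, cb, cc} : Finset _) ⊆ C := fun x hx => hcc x hx
      have := Finset.card_le_card hsub
      omega
    obtain ⟨c₀, _, hc₀C⟩ := hc₀
    have hsub : C ⊆ Finset.univ.erase c₀ := by
      intro x hx
      rw [Finset.mem_erase]
      exact ⟨fun h => hc₀C (h ▸ hx), Finset.mem_univ _⟩
    have hsum : ∑ x ∈ C, (ConnectedComponent.supp x).ncard
        ≤ ∑ x ∈ Finset.univ.erase c₀, (ConnectedComponent.supp x).ncard :=
      Finset.sum_le_sum_of_subset hsub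
    have herase : ∑ x ∈ Finset.univ.erase c₀, (ConnectedComponent.supp x).ncard
        + (ConnectedComponent.supp c₀).ncard
        = ∑ x : (T.induce {u : V | u ≠ v}).ConnectedComponent,
            (ConnectedComponent.supp x).ncard :=
      Finset.sum_erase_add _ _ (Finset.mem_univ _)
    have htot := sum_supp (T.induce {u : V | u ≠ v})
    have hIcard : Fintype.card ↥{u : V | u ≠ v} = Fintype.card V - 1 := by
      have e : ↥{u : V | u ≠ v} ≃ {u : V // ¬ u = v} := Equiv.subtypeEquivRight (fun x => Iff.rfl)
      rw [Fintype.card_congr e, Fintype.card_subtype_compl, Fintype.card_subtype_eq]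
    have hpos : 0 < (ConnectedComponent.supp c₀).ncard := by
      obtain ⟨z, hz⟩ := c₀.exists_rep
      have : z ∈ ConnectedComponent.supp c₀ := by
        rw [ConnectedComponent.mem_supp_iff]
        exact hz
      rw [Set.ncard_pos (Set.toFinite _)]
      exact ⟨z, this⟩
    omega
  have hlow : Fintype.card V - 1 ≤ twoLargestCompDelVert T v := by
    have h1 : branchingNumber2 T ≤ twoLargestCompDelVert T v := Nat.sInf_le ⟨v, rfl⟩
    omega
  omega

def nxt (n x : ℕ) : ℕ := if x + 1 = n then 0 else x + 1
def prv (n x : ℕ) : ℕ := if x = 0 then n - 1 else x - 1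

def chainG (n s q : ℕ) : SimpleGraph (Fin n) :=
  SimpleGraph.fromRel (fun x y =>
    (x.val < q * s ∧ y.val < q * s ∧ x.val / s = y.val / s) ∨ y.val = nxt n x.val)

lemma nxt_lt {n x : ℕ} (hn : 0 < n) (hx : x < n) : nxt n x < n := by
  rw [nxt]; split <;> omega

lemma prv_lt {n x : ℕ} (hn : 0 < n) (hx : x < n) : prv n x < n := by
  rw [prv]; split <;> omega

lemma nxt_inv {n x y : ℕ} (hy : y < n) (h : nxt n y = x) : prv n x = y := by
  rw [nxt] at h; rw [prv]; split at h <;> (split <;> omega)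

lemma adj_cases {n s q : ℕ} {x y : Fin n} (h : (chainG n s q).Adj x y) :
    x ≠ y ∧ ((x.val < q*s ∧ y.val < q*s ∧ y.val/s = x.val/s) ∨ y.val = nxt n x.val
      ∨ x.val = nxt n y.val) := by
  rw [chainG, fromRel_adj] at h
  obtain ⟨hne, h⟩ := h
  refine ⟨hne, ?_⟩
  rcases h with (h | h) | (h | h)
  · exact Or.inl ⟨h.1, h.2.1, h.2.2.symm⟩
  · exact Or.inr (Or.inl h)
  · exact Or.inl ⟨h.2.1, h.1, h.2.2⟩
  · exact Or.inr (Or.inr h)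

lemma adj_same_clique {n s q : ℕ} {x y : Fin n} (hx : x.val < q*s) (hy : y.val < q*s)
    (hd : x.val/s = y.val/s) (hne : x ≠ y) : (chainG n s q).Adj x y := by
  rw [chainG, fromRel_adj]
  exact ⟨hne, Or.inl (Or.inl ⟨hx, hy, hd⟩)⟩

lemma adj_nxt {n s q : ℕ} {x y : Fin n} (h : y.val = nxt n x.val) (hne : x ≠ y) :
    (chainG n s q).Adj x y := by
  rw [chainG, fromRel_adj]
  exact ⟨hne, Or.inl (Or.inr h)⟩

lemma chain_conn {n s q : ℕ} (hn : 0 < n) : (chainG n s q).Connected := by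
  rw [connected_iff]
  refine ⟨?_, ⟨⟨0, hn⟩⟩⟩
  have key : ∀ m (hm : m < n), (chainG n s q).Reachable ⟨0, hn⟩ ⟨m, hm⟩ := by
    intro m
    induction m with
    | zero => intro hm; exact Reachable.refl _
    | succ m ih =>
      intro hm
      have hm' : m < n := lt_trans (Nat.lt_succ_self m) hm
      refine (ih hm').trans (Adj.reachable ?_)
      apply adj_nxt
      · show (m+1 : ℕ) = nxt n m
        rw [nxt, if_neg (by omega)]
      · intro hcon
        have := congrArg Fin.val hcon
        simp at this
  intro x y
  exact ((key x.val x.isLt).symm.trans (key y.val y.isLt))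

lemma clique_facts {s q x : ℕ} (hs : 0 < s) (hx : x < q*s) :
    (x/s)*s + x%s = x ∧ x%s < s ∧ x/s < q ∧ (x/s)*s + s ≤ q*s := by
  have h1 := Nat.div_add_mod x s
  have h2 := Nat.mod_lt x hs
  have h3 : x/s < q := by
    rw [Nat.div_lt_iff_lt_mul hs]; exact hx
  have h4 : (x/s + 1) * s ≤ q * s := Nat.mul_le_mul_right s h3
  have h5 : s * (x/s) = (x/s)*s := mul_comm _ _
  have h6 : (x/s+1)*s = (x/s)*s + s := Nat.succ_mul _ _
  omega

lemma nxt_clique {n s q y : ℕ} (hs : 0 < s) (hqn : q*s ≤ n) (hy : y < q*s)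
    (hp : y % s ≠ s - 1) :
    nxt n y = y + 1 ∧ y + 1 < q*s ∧ (y+1)/s = y/s := by
  obtain ⟨h1, h2, h3, h4⟩ := clique_facts hs hy
  have hlt : y + 1 < q * s := by omega
  refine ⟨by rw [nxt, if_neg (by omega)], hlt, ?_⟩
  rw [div_eq_iff_aux hs]
  omega

lemma prv_clique {n s q y : ℕ} (hs : 0 < s) (hy : y < q*s) (hp : y % s ≠ 0) :
    prv n y = y - 1 ∧ y - 1 < q*s ∧ (y-1)/s = y/s ∧ 1 ≤ y := by
  obtain ⟨h1, h2, h3, h4⟩ := clique_facts hs hy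
  refine ⟨by rw [prv, if_neg (by omega)], by omega, ?_, by omega⟩
  rw [div_eq_iff_aux hs]
  omega

lemma exists_S_Tok {n s q : ℕ} (hs : 2 ≤ s) (hqn : q * s ≤ n) (hn0 : 0 < n) (x : Fin n) :
    ∃ (S : Set (Fin n)) (Tok : Finset (Fin n)), S.ncard ≤ s - 2 ∧ Tok.card ≤ 2 ∧
      (∀ y, (chainG n s q).Adj x y → y ∈ S ∨ y ∈ Tok) ∧
      (∀ y z, y ∈ S → (chainG n s q).Adj y z → z = x ∨ z ∈ S ∨ z ∈ Tok) := by
  have hs0 : 0 < s := by omega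
  by_cases hx : x.val < q * s
  case neg =>
    -- path vertex
    refine ⟨∅, {⟨prv n x.val, prv_lt hn0 x.isLt⟩, ⟨nxt n x.val, nxt_lt hn0 x.isLt⟩}, by simp,
      (Finset.card_insert_le _ _).trans (by simp), ?_, by simp⟩
    intro y hadj
    obtain ⟨hne, hcase⟩ := adj_cases hadj
    rcases hcase with ⟨hx', _, _⟩ | h | h
    · exact absurd hx' hx
    · exact Or.inr (by
        simp only [Finset.mem_insert, Finset.mem_singleton]
        right; exact Fin.ext h)
    · exact Or.inr (by
        simp only [Finset.mem_insert, Finset.mem_singleton]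
        left; exact Fin.ext (nxt_inv y.isLt h.symm).symm)
  case pos =>
    obtain ⟨hdec, hmod, hcq, hcs⟩ := clique_facts hs0 hx
    set c := x.val / s with hc
    set p := x.val % s with hp
    have hgw0lt : c*s < n := by omega
    have hgw1lt : c*s + (s-1) < n := by omega
    -- the confinement set
    set S : Set (Fin n) := {y : Fin n | y.val < q*s ∧ y.val/s = c ∧ y ≠ x ∧
      y.val ≠ c*s ∧ y.val ≠ c*s + (s-1)} with hS
    -- tokens
    set Tok : Finset (Fin n) :=
      if p = 0 then {⟨c*s + (s-1), hgw1lt⟩, ⟨prv n x.val, prv_lt hn0 x.isLt⟩}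
      else if p = s-1 then {⟨c*s, hgw0lt⟩, ⟨nxt n x.val, nxt_lt hn0 x.isLt⟩}
      else {⟨c*s, hgw0lt⟩, ⟨c*s + (s-1), hgw1lt⟩} with hTok
    have hTokcard : Tok.card ≤ 2 := by
      rw [hTok]
      split
      · exact (Finset.card_insert_le _ _).trans (by simp)
      split
      · exact (Finset.card_insert_le _ _).trans (by simp)
      · exact (Finset.card_insert_le _ _).trans (by simp)
    have hScard : S.ncard ≤ s - 2 := by
      have hsub : S ⊆ ↑((Finset.Icc 1 (s-2)).image
          (fun m => (⟨(c*s+m) % n, Nat.mod_lt _ hn0⟩ : Fin n))) := by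
        intro y hy
        obtain ⟨hy1, hy2, hy3, hy4, hy5⟩ := hy
        obtain ⟨hd1, hd2, _, _⟩ := clique_facts hs0 hy1
        rw [hy2] at hd1
        simp only [Finset.coe_image, Set.mem_image, Finset.mem_coe, Finset.mem_Icc]
        refine ⟨y.val % s, ⟨by omega, by omega⟩, ?_⟩
        apply Fin.ext
        show (c*s + y.val % s) % n = y.val
        rw [hd1, Nat.mod_eq_of_lt y.isLt]
      calc S.ncard ≤ _ := Set.ncard_le_ncard hsub (Finset.finite_toSet _)
        _ = ((Finset.Icc 1 (s-2)).image
            (fun m => (⟨(c*s+m) % n, Nat.mod_lt _ hn0⟩ : Fin n))).card :=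
          Set.ncard_coe_finset _
        _ ≤ (Finset.Icc 1 (s-2)).card := Finset.card_image_le
        _ ≤ s - 2 := by rw [Nat.card_Icc]; omega
    -- membership helpers
    have hTokgw : ∀ y : Fin n, (y.val = c*s ∨ y.val = c*s + (s-1)) → y ≠ x → y ∈ Tok := by
      intro y hy hyx
      rw [hTok]
      by_cases hp0 : p = 0
      · rw [if_pos hp0]
        rcases hy with hy | hy
        · exact absurd (Fin.ext (by omega : y.val = x.val)) hyx
        · simp only [Finset.mem_insert, Finset.mem_singleton]
          left; exact Fin.ext hy
      by_cases hp1 : p = s-1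
      · rw [if_neg hp0, if_pos hp1]
        rcases hy with hy | hy
        · simp only [Finset.mem_insert, Finset.mem_singleton]
          left; exact Fin.ext hy
        · exact absurd (Fin.ext (by omega : y.val = x.val)) hyx
      · rw [if_neg hp0, if_neg hp1]
        simp only [Finset.mem_insert, Finset.mem_singleton]
        rcases hy with hy | hy
        · left; exact Fin.ext hy
        · right; exact Fin.ext hy
    have hclass : ∀ y : Fin n, y.val < q*s → y.val/s = c → y ≠ x → y ∈ S ∨ y ∈ Tok := by
      intro y hy1 hy2 hy3
      by_cases hy4 : y.val = c*s
      · exact Or.inr (hTokgw y (Or.inl hy4) hy3)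
      by_cases hy5 : y.val = c*s + (s-1)
      · exact Or.inr (hTokgw y (Or.inr hy5) hy3)
      · exact Or.inl ⟨hy1, hy2, hy3, hy4, hy5⟩
    refine ⟨S, Tok, hScard, hTokcard, ?_, ?_⟩
    · -- A4
      intro y hadj
      obtain ⟨hne, hcase⟩ := adj_cases hadj
      rcases hcase with ⟨_, hy', hd⟩ | h | h
      · exact hclass y hy' hd (Ne.symm hne)
      · -- y = nxt x
        by_cases hp1 : p = s - 1
        · refine Or.inr ?_
          rw [hTok, if_neg (by omega), if_pos hp1]
          simp only [Finset.mem_insert, Finset.mem_singleton]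
          right; exact Fin.ext h
        · obtain ⟨he1, he2, he3⟩ := nxt_clique hs0 hqn hx hp1
          have hyv : y.val = x.val + 1 := by rw [h, he1]
          exact hclass y (by omega) (by rw [hyv]; exact he3) (by
            intro hcon; rw [hcon] at hyv; omega)
      · -- x = nxt y, i.e. y = prv x
        have hyv : y.val = prv n x.val := (nxt_inv y.isLt h.symm).symm
        by_cases hp0 : p = 0
        · refine Or.inr ?_
          rw [hTok, if_pos hp0]
          simp only [Finset.mem_insert, Finset.mem_singleton]
          right; exact Fin.ext hyv
        · obtain ⟨he1, he2, he3, he4⟩ := prv_clique (n := n) hs0 hx hp0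
          have hyv' : y.val = x.val - 1 := by rw [hyv, he1]
          exact hclass y (by omega) (by rw [hyv']; exact he3) (by
            intro hcon; rw [hcon] at hyv'; omega)
    · -- A5
      intro y z hyS hadj
      obtain ⟨hy1, hy2, hy3, hy4, hy5⟩ := hyS
      obtain ⟨hyd, hym, _, _⟩ := clique_facts hs0 hy1
      rw [hy2] at hyd
      have hymod0 : y.val % s ≠ 0 := by omega
      have hymod1 : y.val % s ≠ s - 1 := by omega
      have hsame : ∀ w : Fin n, w.val < q*s → w.val/s = c → z = w → z = x ∨ z ∈ S ∨ z ∈ Tok := by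
        intro w hw1 hw2 hzw
        by_cases hzx : z = x
        · exact Or.inl hzx
        · rw [hzw]
          rcases hclass w hw1 hw2 (fun hh => hzx (hzw.trans hh)) with h | h
          · exact Or.inr (Or.inl h)
          · exact Or.inr (Or.inr h)
      obtain ⟨hne, hcase⟩ := adj_cases hadj
      rcases hcase with ⟨_, hz', hd⟩ | h | h
      · exact hsame z hz' (hd.trans hy2) rfl
      · obtain ⟨he1, he2, he3⟩ := nxt_clique hs0 hqn hy1 hymod1
        have hzv : z.val = y.val + 1 := by rw [h, he1]
        exact hsame z (by omega) (by rw [hzv, he3]; exact hy2) rfl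
      · have hzv : z.val = prv n y.val := (nxt_inv z.isLt h.symm).symm
        obtain ⟨he1, he2, he3, he4⟩ := prv_clique (n := n) hs0 hy1 hymod0
        have hzv' : z.val = y.val - 1 := by rw [hzv, he1]
        exact hsame z (by omega) (by rw [hzv', he3]; exact hy2) rfl

lemma decomp_unique {s c c' p p' : ℕ} (hs : 0 < s) (hp : p < s) (hp' : p' < s)
    (h : c*s+p = c'*s+p') : c = c' ∧ p = p' := by
  have h1 : (c*s+p)/s = c := by rw [div_eq_iff_aux hs]; omega
  have h2 : (c'*s+p')/s = c' := by rw [div_eq_iff_aux hs]; omega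
  have hcc : c = c' := by rw [← h1, ← h2, h]
  subst hcc
  omega

lemma edge_count {n s q r : ℕ} (hs : 2 ≤ s) (hnq : n = q*s + r) (hr : r < s)
    (hq : 1 ≤ q) (hsn : s < n) :
    q * (1 + s.choose 2) ≤ (chainG n s q).edgeSet.ncard := by
  classical
  have hs0 : 0 < s := by omega
  have hn0 : 0 < n := by omega
  have hqn : q * s ≤ n := by omega
  set emb : ℕ → Fin s → Fin n := fun c p => ⟨(c*s + p.val) % n, Nat.mod_lt _ hn0⟩ with hemb
  have hmul : ∀ c, c < q → c*s + s ≤ q*s := by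
    intro c hc
    have h1 : (c+1)*s ≤ q*s := Nat.mul_le_mul_right s hc
    have h2 : (c+1)*s = c*s + s := by ring
    omega
  have hembv : ∀ c, c < q → ∀ p : Fin s, (emb c p).val = c*s + p.val := by
    intro c hc p
    show (c*s + p.val) % n = c*s + p.val
    apply Nat.mod_eq_of_lt
    have h1 := p.isLt
    have h2 := hmul c hc
    omega
  set CE : Finset (Sym2 (Fin n)) :=
    ((Finset.range q) ×ˢ (⊤ : SimpleGraph (Fin s)).edgeFinset).image
      (fun ce => Sym2.map (emb ce.1) ce.2) with hCE
  set CO : Finset (Sym2 (Fin n)) :=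
    (Finset.range q).image
      (fun c => s((⟨(c*s + (s-1)) % n, Nat.mod_lt _ hn0⟩ : Fin n),
                  (⟨(c*s + s) % n, Nat.mod_lt _ hn0⟩ : Fin n))) with hCO
  have hA : ∀ c, c < q → (c*s + (s-1)) % n = c*s + (s-1) := by
    intro c hc
    apply Nat.mod_eq_of_lt
    have := hmul c hc
    omega
  -- CE edges are edges
  have hCEmem : ∀ e ∈ CE, e ∈ (chainG n s q).edgeSet := by
    intro e he
    rw [hCE, Finset.mem_image] at he
    obtain ⟨⟨c, e₀⟩, hmem, rfl⟩ := he
    rw [Finset.mem_product, Finset.mem_range] at hmem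
    obtain ⟨hc, he₀⟩ := hmem
    revert he₀
    refine Sym2.inductionOn e₀ ?_
    intro p₁ p₂ he₀
    simp only [mem_edgeFinset, mem_edgeSet, top_adj] at he₀
    rw [Sym2.map_pair_eq, mem_edgeSet]
    apply adj_same_clique
    · rw [hembv c hc]
      have := p₁.isLt
      have := hmul c hc
      omega
    · rw [hembv c hc]
      have := p₂.isLt
      have := hmul c hc
      omega
    · rw [hembv c hc, hembv c hc]
      have d1 : (c*s + p₁.val)/s = c := by
        rw [div_eq_iff_aux hs0]; have := p₁.isLt; omega
      have d2 : (c*s + p₂.val)/s = c := by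
        rw [div_eq_iff_aux hs0]; have := p₂.isLt; omega
      rw [d1, d2]
    · intro hcon
      apply he₀
      apply Fin.ext
      have := congrArg Fin.val hcon
      rw [hembv c hc, hembv c hc] at this
      omega
  -- CO edges are edges
  have hCOmem : ∀ e ∈ CO, e ∈ (chainG n s q).edgeSet := by
    intro e he
    rw [hCO, Finset.mem_image] at he
    obtain ⟨c, hc, rfl⟩ := he
    rw [Finset.mem_range] at hc
    rw [mem_edgeSet]
    have hAv := hA c hc
    have hle : c*s + s ≤ n := le_trans (hmul c hc) hqn
    apply adj_nxt
    · show (c*s + s) % n = nxt n ((c*s + (s-1)) % n)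
      rw [hAv, nxt]
      by_cases hend : c*s + s = n
      · rw [if_pos (by omega), hend, Nat.mod_self]
      · rw [if_neg (by omega), Nat.mod_eq_of_lt (by omega)]
        omega
    · intro hcon
      have := congrArg Fin.val hcon
      simp only at this
      rw [hAv] at this
      by_cases hend : c*s + s = n
      · rw [hend, Nat.mod_self] at this
        omega
      · rw [Nat.mod_eq_of_lt (by omega)] at this
        omega
  -- cardinality of CE
  have hCEcard : CE.card = q * s.choose 2 := by
    rw [hCE, Finset.card_image_of_injOn]
    · rw [Finset.card_product, Finset.card_range, card_edgeFinset_top_eq_card_choose_two,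
        Fintype.card_fin]
    · rintro ⟨c, e₀⟩ hmem ⟨c', e₀'⟩ hmem' heq
      rw [Finset.mem_coe, Finset.mem_product, Finset.mem_range] at hmem hmem'
      obtain ⟨hc, he₀⟩ := hmem
      obtain ⟨hc', he₀'⟩ := hmem'
      simp only at heq
      revert he₀ he₀' heq
      refine Sym2.inductionOn₂ e₀ e₀' ?_
      intro p₁ p₂ p₁' p₂' he₀ he₀' heq
      rw [Sym2.map_pair_eq, Sym2.map_pair_eq, Sym2.eq_iff] at heq
      have hv : ∀ (a : Fin s) (b : Fin s), emb c a = emb c' b →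
          c = c' ∧ a = b := by
        intro a b hab
        have := congrArg Fin.val hab
        rw [hembv c hc, hembv c' hc'] at this
        obtain ⟨h1, h2⟩ := decomp_unique hs0 a.isLt b.isLt this
        exact ⟨h1, Fin.ext h2⟩
      rcases heq with ⟨h1, h2⟩ | ⟨h1, h2⟩
      · obtain ⟨hcc, hpp⟩ := hv _ _ h1
        obtain ⟨-, hpp'⟩ := hv _ _ h2
        rw [Prod.mk.injEq]
        exact ⟨hcc, by rw [hpp, hpp']⟩
      · obtain ⟨hcc, hpp⟩ := hv _ _ h1
        obtain ⟨-, hpp'⟩ := hv _ _ h2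
        rw [Prod.mk.injEq]
        refine ⟨hcc, ?_⟩
        rw [Sym2.eq_iff]
        right
        exact ⟨hpp, hpp'⟩
  -- second endpoint of CO edges is not in a clique-consistent position
  have hCOsnd : ∀ c', c' < q → ((c'*s + s) % n < q*s → ((c'*s + s) % n)/s = c' → False) := by
    intro c' hc' hlt hdiv
    by_cases hend : c'*s + s = n
    · rw [hend, Nat.mod_self, Nat.zero_div] at hdiv
      subst hdiv
      have h00 : (0:ℕ) * s = 0 := by ring
      omega
    · have hle : c'*s + s ≤ n := le_trans (hmul c' hc') hqn
      rw [Nat.mod_eq_of_lt (by omega)] at hdiv hlt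
      rw [div_eq_iff_aux hs0] at hdiv
      omega
  -- cardinality of CO
  have hCOcard : CO.card = q := by
    rw [hCO, Finset.card_image_of_injOn]
    · exact Finset.card_range q
    · intro c hc c' hc' heq
      rw [Finset.mem_coe, Finset.mem_range] at hc hc'
      simp only [Sym2.eq_iff] at heq
      rcases heq with ⟨h1, h2⟩ | ⟨h1, h2⟩
      · rw [Fin.mk.injEq] at h1
        rw [hA c hc, hA c' hc'] at h1
        exact (decomp_unique hs0 (by omega) (by omega) h1).1
      · -- cross case: c*s + (s-1) = (c'*s+s) % n
        exfalso
        rw [Fin.mk.injEq] at h1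
        have hv1 := h1
        rw [hA c hc] at hv1
        by_cases hend : c'*s + s = n
        · rw [hend, Nat.mod_self] at hv1
          omega
        · have hle : c'*s + s ≤ n := le_trans (hmul c' hc') hqn
          rw [Nat.mod_eq_of_lt (by omega)] at hv1
          have hv1' : c*s + (s-1) = (c'+1)*s + 0 := by
            have : (c'+1)*s = c'*s + s := by ring
            omega
          have := decomp_unique hs0 (by omega) (by omega) hv1'
          omega
  -- disjointness of CE and CO
  have hdisj : Disjoint CE CO := by
    rw [Finset.disjoint_left]
    intro e heCE heCO
    rw [hCE, Finset.mem_image] at heCE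
    obtain ⟨⟨c, e₀⟩, hmem, he₁⟩ := heCE
    rw [Finset.mem_product, Finset.mem_range] at hmem
    obtain ⟨hc, he₀⟩ := hmem
    rw [hCO, Finset.mem_image] at heCO
    obtain ⟨c', hc', he₂⟩ := heCO
    rw [Finset.mem_range] at hc'
    have hcore : ∀ (pa pb : Fin s), (emb c pa).val = c'*s + (s-1) →
        (emb c pb).val = (c'*s + s) % n → False := by
      intro pa pb hva hvb
      rw [hembv c hc] at hva hvb
      have hcc : c = c' := (decomp_unique hs0 pa.isLt (by omega) hva).1
      subst hcc
      apply hCOsnd c hc'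
      · rw [← hvb]
        have := pb.isLt
        have := hmul c hc
        omega
      · rw [← hvb, div_eq_iff_aux hs0]
        have := pb.isLt
        omega
    revert he₀ he₁
    refine Sym2.inductionOn e₀ ?_
    intro p₁ p₂ hmap _hmem
    simp only [Sym2.map_pair_eq] at hmap
    have heq := hmap.trans he₂.symm
    rw [Sym2.eq_iff] at heq
    rcases heq with ⟨hA1, hB1⟩ | ⟨hB1, hA1⟩
    · refine hcore p₁ p₂ ?_ ?_
      · have hval : (emb c p₁).val = (c'*s + (s-1)) % n := by rw [hA1]
        rwa [hA c' hc'] at hval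
      · have hval : (emb c p₂).val = (c'*s + s) % n := by rw [hB1]
        exact hval
    · refine hcore p₂ p₁ ?_ ?_
      · have hval : (emb c p₂).val = (c'*s + (s-1)) % n := by rw [hA1]
        rwa [hA c' hc'] at hval
      · have hval : (emb c p₁).val = (c'*s + s) % n := by rw [hB1]
        exact hval
  have hE₀card : (CE ∪ CO).card = q * s.choose 2 + q := by
    rw [Finset.card_union_of_disjoint hdisj, hCEcard, hCOcard]
  haveI : Fintype (chainG n s q).edgeSet := Set.Finite.fintype (Set.toFinite _)
  rw [Set.ncard_eq_toFinset_card']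
  have hsub : CE ∪ CO ⊆ (chainG n s q).edgeSet.toFinset := by
    intro e he
    rw [Set.mem_toFinset]
    rcases Finset.mem_union.mp he with h | h
    · exact hCEmem e h
    · exact hCOmem e h
  calc q * (1 + s.choose 2) = q * s.choose 2 + q := by ring
    _ = (CE ∪ CO).card := hE₀card.symm
    _ ≤ _ := Finset.card_le_card hsub

lemma one_le_twoLargest {V : Type*} [Fintype V] (T : SimpleGraph V) (v : V)
    (hcard : 2 ≤ Fintype.card V) : 1 ≤ twoLargestCompDelVert T v := by
  classical
  haveI : Fintype ((T.induce {u : V | u ≠ v}).ConnectedComponent) := by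
    have : Finite ((T.induce {u : V | u ≠ v}).ConnectedComponent) := Quot.finite _
    exact Fintype.ofFinite _
  have hex : ∃ u : V, u ≠ v := by
    by_contra h
    push_neg at h
    have : Fintype.card V ≤ 1 :=
      Fintype.card_le_one_iff.mpr (fun a b => (h a).trans (h b).symm)
    omega
  obtain ⟨u, hu⟩ := hex
  set c := (T.induce {u : V | u ≠ v}).connectedComponentMk ⟨u, hu⟩ with hcdef
  have hbdd : BddAbove {m | ∃ C : Finset ((T.induce {u | u ≠ v}).ConnectedComponent),
      C.card ≤ 2 ∧ m = ∑ c ∈ C, c.supp.ncard} := by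
    refine ⟨Fintype.card ↥{u : V | u ≠ v}, ?_⟩
    rintro m ⟨C, _, rfl⟩
    calc ∑ c ∈ C, (ConnectedComponent.supp c).ncard
        ≤ ∑ c : (T.induce {u : V | u ≠ v}).ConnectedComponent,
            (ConnectedComponent.supp c).ncard :=
          Finset.sum_le_sum_of_subset (Finset.subset_univ C)
      _ = _ := sum_supp _
  have hmem : (ConnectedComponent.supp c).ncard ∈ {m | ∃ C :
      Finset ((T.induce {u | u ≠ v}).ConnectedComponent),
      C.card ≤ 2 ∧ m = ∑ c ∈ C, c.supp.ncard} :=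
    ⟨{c}, by simp, by simp⟩
  have h1 : 1 ≤ (ConnectedComponent.supp c).ncard := by
    have : (⟨u, hu⟩ : ↥{u : V | u ≠ v}) ∈ ConnectedComponent.supp c := by
      rw [ConnectedComponent.mem_supp_iff]
    have hpos := (Set.ncard_pos (Set.toFinite _)).mpr ⟨_, this⟩
    omega
  exact le_trans h1 (le_csSup hbdd hmem)

end ExConnAux

open ExConnAux in
/-- Proposition (two branches construction): if `T` is a tree on `k ≥ 4` vertices which
is not a path, then for `n ≥ k`, `ex_c(n,T) ≥ ⌊n/(k-m_2(T))⌋ (1 + C(k-m_2(T), 2))`. -/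
theorem exConn_ge_of_branchingNumber2 {V : Type*} [Fintype V] (T : SimpleGraph V) (k : ℕ)
    (hk : 4 ≤ k) (hcard : Fintype.card V = k) (hT : T.IsTree) (hnp : ¬ IsPathGraph T)
    (n : ℕ) (hn : k ≤ n) :
    n / (k - branchingNumber2 T) * (1 + (k - branchingNumber2 T).choose 2)
      ≤ exConn n T := by
  classical
  have hV : Nonempty V := by
    rw [← Fintype.card_pos_iff]
    omega
  set m₂ := branchingNumber2 T with hm₂def
  set s := k - m₂ with hsdef
  have hm1 : 1 ≤ m₂ := by
    obtain ⟨v, hv⟩ := Nat.sInf_mem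
      (Set.range_nonempty (fun v => twoLargestCompDelVert T v))
    have hv' : twoLargestCompDelVert T v = m₂ := hv
    rw [← hv']
    exact one_le_twoLargest T v (by omega)
  have hm2k : m₂ + 2 ≤ k := by
    have := branching_le hT hnp (by omega : 3 ≤ Fintype.card V)
    rw [hcard] at this
    omega
  have hs2 : 2 ≤ s := by omega
  have hsn : s < n := by omega
  set q := n / s with hqdef
  set r := n % s with hrdef
  have hnq : n = q * s + r := by
    rw [hqdef, hrdef]
    have h := Nat.div_add_mod n s
    have h2 : s * (n / s) = (n / s) * s := mul_comm _ _
    omega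
  have hr : r < s := by
    rw [hrdef]
    exact Nat.mod_lt n (by omega)
  have hq1 : 1 ≤ q := by
    rw [hqdef]
    exact (Nat.le_div_iff_mul_le (by omega)).mpr (by omega)
  have hn0 : 0 < n := by omega
  have hconnG : (chainG n s q).Connected := chain_conn hn0
  have hfree : ¬ ContainsCopy T (chainG n s q) := by
    rintro ⟨φ, hφ⟩
    have hkey : ∀ v : V, Fintype.card V - 1 ≤ twoLargestCompDelVert T v + (s - 2) := by
      intro v
      obtain ⟨S, Tok, hS, hTok, hA4, hA5⟩ :=
        exists_S_Tok hs2 (by omega : q * s ≤ n) hn0 (φ v)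
      have := card_le_of_emb hT.isConnected φ hφ v S (Set.toFinite _) Tok hTok hA4 hA5
      omega
    obtain ⟨v₀, hv₀⟩ := Nat.sInf_mem
      (Set.range_nonempty (fun v => twoLargestCompDelVert T v))
    have hv₀' : twoLargestCompDelVert T v₀ = m₂ := hv₀
    have h1 := hkey v₀
    rw [hcard, hv₀'] at h1
    omega
  have hedge := edge_count hs2 hnq hr hq1 hsn
  have hbdd : BddAbove {m | ∃ G : SimpleGraph (Fin n), G.Connected ∧ ¬ ContainsCopy T G ∧
      m = G.edgeSet.ncard} := by
    refine ⟨n.choose 2, ?_⟩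
    rintro m ⟨G, -, -, rfl⟩
    haveI : Fintype G.edgeSet := Set.Finite.fintype (Set.toFinite _)
    rw [Set.ncard_eq_toFinset_card']
    have h2 := SimpleGraph.card_edgeFinset_le_card_choose_two (G := G)
    rw [Fintype.card_fin] at h2
    exact h2
  have hmem : (chainG n s q).edgeSet.ncard ∈ {m | ∃ G : SimpleGraph (Fin n),
      G.Connected ∧ ¬ ContainsCopy T G ∧ m = G.edgeSet.ncard} :=
    ⟨chainG n s q, hconnG, hfree, rfl⟩
  exact le_trans hedge (le_csSup hbdd hmem)
end

section
/- Let T be a tree on k ≥ 4 vertices that is not a star, and let δ_2(T) denote the smallest vertex degree of T that is larger than 1. If δ_2(T) > 2, then for every n ≥ k, ex_c(n,T) ≥ ⌊(n−1)/(k−1)⌋ · (C(k−2, 2) + δ_2(T) − 1), where C(m,2) denotes the binomial coefficient m choose 2. -/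
open SimpleGraph

/-- `G` is a star: some vertex is adjacent to all other vertices and every edge is
incident to it. -/
def IsStar {V : Type*} (G : SimpleGraph V) : Prop :=
  ∃ v, (∀ u, u ≠ v → G.Adj v u) ∧ ∀ x y, G.Adj x y → x = v ∨ y = v

/-- `δ_2(G)`: the smallest vertex degree of `G` that is larger than 1. -/
noncomputable def delta2 {V : Type*} [Fintype V] (G : SimpleGraph V)
    [DecidableRel G.Adj] : ℕ :=
  sInf {d | 1 < d ∧ ∃ v, G.degree v = d}

section Helpers
variable {V : Type*}

lemma closure_all (G : SimpleGraph V) (hc : G.Connected) (S : Set V)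
    {a : V} (ha : a ∈ S) (hcl : ∀ x ∈ S, ∀ y, G.Adj x y → y ∈ S) : ∀ z, z ∈ S := by
  have key : ∀ (x z : V) (_ : G.Walk x z), x ∈ S → z ∈ S := by
    intro x z w
    induction w with
    | nil => exact id
    | cons h p ih => intro hx; exact ih (hcl _ hx _ h)
  intro z
  obtain ⟨w⟩ := hc.preconnected a z
  exact key a z w ha

lemma exists_adj_of_reachable {G : SimpleGraph V} {x y : V} (hxy : x ≠ y)
    (h : G.Reachable x y) : ∃ z, G.Adj x z := by
  obtain ⟨w⟩ := h
  cases w with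
  | nil => exact absurd rfl hxy
  | cons h p => exact ⟨_, h⟩

variable [Fintype V] (T : SimpleGraph V) [DecidableRel T.Adj]

lemma deg_pos_of_connected (hc : T.Connected) (h2 : 2 ≤ Fintype.card V) (v : V) :
    1 ≤ T.degree v := by
  have : Nontrivial V := Fintype.one_lt_card_iff_nontrivial.mp (by omega)
  obtain ⟨w, hw⟩ := exists_ne v
  obtain ⟨z, hz⟩ := exists_adj_of_reachable (Ne.symm hw) (hc.preconnected v w)
  rw [Nat.one_le_iff_ne_zero, ← Nat.pos_iff_ne_zero, T.degree_pos_iff_exists_adj]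
  exact ⟨z, hz⟩

lemma nbhd_eq_of_deg_one {v x : V} (h1 : T.degree v = 1) (hadj : T.Adj v x) :
    ∀ y, T.Adj v y → y = x := by
  intro y hy
  obtain ⟨a, hA⟩ := Finset.card_eq_one.mp h1
  have hx : x ∈ T.neighborFinset v := by simp [hadj]
  have hy' : y ∈ T.neighborFinset v := by simp [hy]
  rw [hA, Finset.mem_singleton] at hx hy'
  rw [hx, hy']

lemma exists_deg_two (hc : T.Connected) (h3 : 3 ≤ Fintype.card V) :
    ∃ v, 2 ≤ T.degree v := by
  classical
  by_contra hcon
  push_neg at hcon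
  obtain ⟨x, y, hxy⟩ := Fintype.exists_pair_of_one_lt_card (α := V) (by omega)
  obtain ⟨z, hz⟩ := exists_adj_of_reachable hxy (hc.preconnected x y)
  have hdx : T.degree x = 1 := by
    have := deg_pos_of_connected T hc (by omega) x
    have := hcon x; omega
  have hdz : T.degree z = 1 := by
    have := deg_pos_of_connected T hc (by omega) z
    have := hcon z; omega
  have hall : ∀ w, w ∈ ({x, z} : Set V) := by
    refine closure_all T hc _ (show x ∈ ({x, z} : Set V) by simp) ?_
    rintro u (rfl | rfl) w hw
    · exact Or.inr (nbhd_eq_of_deg_one T hdx hz w hw)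
    · exact Or.inl (nbhd_eq_of_deg_one T hdz hz.symm w hw)
  have hsub : (Finset.univ : Finset V) ⊆ {x, z} := by
    intro w _
    have := hall w
    simp only [Set.mem_insert_iff, Set.mem_singleton_iff] at this
    rcases this with rfl | rfl <;> simp
  have h1 := Finset.card_le_card hsub
  rw [Finset.card_univ] at h1
  have h2 : ({x, z} : Finset V).card ≤ 2 := by
    have := Finset.card_insert_le x ({z} : Finset V)
    simpa using this
  omega

/-- every vertex of degree ≥ 2 has a neighbor of degree ≥ 2, unless T is a star -/
lemma internal_neighbor (hc : T.Connected) (hns : ¬ IsStar T) {v : V}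
    (h2 : 2 ≤ T.degree v) : ∃ w, T.Adj v w ∧ 2 ≤ T.degree w := by
  by_contra hcon
  push_neg at hcon
  have hleaf : ∀ w, T.Adj v w → T.degree w = 1 := by
    intro w hw
    have h1 : 1 ≤ T.degree w := by
      rw [Nat.one_le_iff_ne_zero, ← Nat.pos_iff_ne_zero, T.degree_pos_iff_exists_adj]
      exact ⟨v, hw.symm⟩
    have := hcon w hw
    omega
  have hall : ∀ w, w ∈ {x | x = v ∨ T.Adj v x} := by
    refine closure_all T hc _ (Or.inl rfl) ?_
    rintro u (rfl | hu) w hw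
    · exact Or.inr hw
    · exact Or.inl (nbhd_eq_of_deg_one T (hleaf u hu) hu.symm w hw)
  apply hns
  refine ⟨v, ?_, ?_⟩
  · intro u hu
    rcases hall u with h | h
    · exact absurd h hu
    · exact h
  · intro a b hab
    rcases hall a with h | h
    · exact Or.inl h
    · exact Or.inr (nbhd_eq_of_deg_one T (hleaf a h) h.symm b hab)

end Helpers

section Construction

variable (t s c e : ℕ)

/-- vertex type: t blocks of (clique of size c + special vertex u at position c), plus s extras -/
abbrev CW := (Fin t × Fin (c+1)) ⊕ Fin s

def crel : CW t s c → CW t s c → Prop := fun x y =>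
  match x, y with
  | .inl (i,a), .inl (j,b) => i = j ∧ (((a:ℕ) < c ∧ (b:ℕ) < c) ∨ ((a:ℕ) = c ∧ (b:ℕ) < e))
  | .inl (_,a), .inr p => (a:ℕ) = c ∧ (p:ℕ) = 0
  | .inr _, .inl _ => False
  | .inr p, .inr q => (q:ℕ) = (p:ℕ)+1

def CG : SimpleGraph (CW t s c) := SimpleGraph.fromRel (crel t s c e)

variable {t s c e}

lemma CG_adj {x y : CW t s c} :
    (CG t s c e).Adj x y ↔ x ≠ y ∧ (crel t s c e x y ∨ crel t s c e y x) :=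
  SimpleGraph.fromRel_adj _ x y

/-- neighbors of a clique vertex are in the same block -/
lemma CG_nbr_clique {i : Fin t} {a : Fin (c+1)} (ha : (a:ℕ) < c) {w : CW t s c}
    (h : (CG t s c e).Adj (Sum.inl (i, a)) w) :
    ∃ b : Fin (c+1), w = Sum.inl (i, b) ∧ b ≠ a := by
  rw [CG_adj] at h
  obtain ⟨hne, h | h⟩ := h
  · rcases w with ⟨j, b⟩ | p
    · obtain ⟨rfl, _⟩ := h
      exact ⟨b, rfl, by rintro rfl; exact hne rfl⟩
    · simp only [crel] at h; omega
  · rcases w with ⟨j, b⟩ | p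
    · obtain ⟨rfl, _⟩ := h
      exact ⟨b, rfl, by rintro rfl; exact hne rfl⟩
    · simp only [crel] at h

/-- neighbors of the special vertex u_i -/
lemma CG_nbr_u (hec : e ≤ c) {i : Fin t} {a : Fin (c+1)} (ha : (a:ℕ) = c) {w : CW t s c}
    (h : (CG t s c e).Adj (Sum.inl (i, a)) w) :
    (∃ b : Fin (c+1), w = Sum.inl (i, b) ∧ (b:ℕ) < e) ∨ (∃ p : Fin s, w = Sum.inr p ∧ (p:ℕ) = 0) := by
  rw [CG_adj] at h
  obtain ⟨hne, h | h⟩ := h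
  · rcases w with ⟨j, b⟩ | p
    · obtain ⟨rfl, h | h⟩ := h
      · omega
      · exact Or.inl ⟨b, rfl, h.2⟩
    · exact Or.inr ⟨p, rfl, h.2⟩
  · rcases w with ⟨j, b⟩ | p
    · obtain ⟨rfl, h | h⟩ := h
      · omega
      · omega
    · simp only [crel] at h

/-- neighbors of extras with positive index -/
lemma CG_nbr_extra {p : Fin s} (hp : 1 ≤ (p:ℕ)) {w : CW t s c}
    (h : (CG t s c e).Adj (Sum.inr p) w) :
    ∃ q : Fin s, w = Sum.inr q ∧ ((q:ℕ) = (p:ℕ)+1 ∨ ((q:ℕ))+1 = (p:ℕ)) := by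
  rw [CG_adj] at h
  obtain ⟨hne, h | h⟩ := h
  · rcases w with ⟨j, b⟩ | q
    · simp only [crel] at h
    · exact ⟨q, rfl, Or.inl h⟩
  · rcases w with ⟨j, b⟩ | q
    · simp only [crel] at h; omega
    · exact ⟨q, rfl, Or.inr h.symm⟩

/-- neighbors of the hub -/
lemma CG_nbr_hub {p : Fin s} (hp : (p:ℕ) = 0) {w : CW t s c}
    (h : (CG t s c e).Adj (Sum.inr p) w) :
    (∃ i : Fin t, ∃ a : Fin (c+1), w = Sum.inl (i, a) ∧ (a:ℕ) = c) ∨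
      (∃ q : Fin s, w = Sum.inr q ∧ (q:ℕ) = 1) := by
  rw [CG_adj] at h
  obtain ⟨hne, h | h⟩ := h
  · rcases w with ⟨j, b⟩ | q
    · simp only [crel] at h
    · exact Or.inr ⟨q, rfl, by simp only [crel] at h; omega⟩
  · rcases w with ⟨j, b⟩ | q
    · exact Or.inl ⟨j, b, rfl, h.1⟩
    · simp only [crel] at h; omega

lemma CG_conn (ht : 1 ≤ t) (hs : 1 ≤ s) (hc1 : 1 ≤ c) (he1 : 1 ≤ e) (hec : e ≤ c) :
    (CG t s c e).Connected := by
  have hub : CW t s c := Sum.inr ⟨0, hs⟩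
  have hadj_u_hub : ∀ i : Fin t,
      (CG t s c e).Adj (Sum.inl (i, Fin.last c)) (Sum.inr ⟨0, hs⟩) := by
    intro i
    rw [CG_adj]
    exact ⟨by simp, Or.inl ⟨by simp, rfl⟩⟩
  have reach : ∀ x : CW t s c, (CG t s c e).Reachable x (Sum.inr ⟨0, hs⟩) := by
    have reachP : ∀ (m : ℕ) (hm : m < s),
        (CG t s c e).Reachable (Sum.inr ⟨m, hm⟩) (Sum.inr ⟨0, hs⟩) := by
      intro m
      induction m with
      | zero => intro hm; rfl
      | succ m ih =>
        intro hm
        have hadj : (CG t s c e).Adj (Sum.inr ⟨m+1, hm⟩) (Sum.inr ⟨m, by omega⟩) := by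
          rw [CG_adj]
          refine ⟨by simp, Or.inr rfl⟩
        exact hadj.reachable.trans (ih (by omega))
    rintro (⟨i, a⟩ | p)
    · rcases Nat.lt_or_ge (a:ℕ) c with hac | hac
      · -- clique vertex
        have hu : (CG t s c e).Reachable (Sum.inl (i, Fin.last c)) (Sum.inr ⟨0, hs⟩) :=
          (hadj_u_hub i).reachable
        rcases Nat.lt_or_ge (a:ℕ) e with hae | hae
        · -- adjacent to u directly
          have : (CG t s c e).Adj (Sum.inl (i, a)) (Sum.inl (i, Fin.last c)) := by
            rw [CG_adj]
            refine ⟨?_, Or.inr ⟨rfl, Or.inr ⟨by simp, hae⟩⟩⟩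
            simp only [ne_eq, Sum.inl.injEq, Prod.mk.injEq, true_and]
            intro h; rw [h] at hac; simp at hac
          exact this.reachable.trans hu
        · -- go through clique vertex 0
          have h0 : (CG t s c e).Adj (Sum.inl (i, a)) (Sum.inl (i, ⟨0, by omega⟩)) := by
            rw [CG_adj]
            refine ⟨?_, Or.inl ⟨rfl, Or.inl ⟨hac, by simpa using (by omega : 0 < c)⟩⟩⟩
            simp only [ne_eq, Sum.inl.injEq, Prod.mk.injEq, true_and]
            intro h; have h' : (a:ℕ) = 0 := congrArg Fin.val h; omega
          have h1 : (CG t s c e).Adj (Sum.inl (i, ⟨0, by omega⟩)) (Sum.inl (i, Fin.last c)) := by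
            rw [CG_adj]
            refine ⟨?_, Or.inr ⟨rfl, Or.inr ⟨by simp, by simpa using (by omega : 0 < e)⟩⟩⟩
            simp only [ne_eq, Sum.inl.injEq, Prod.mk.injEq, true_and]
            intro h; rw [Fin.ext_iff] at h; simp at h; omega
          exact h0.reachable.trans (h1.reachable.trans hu)
      · -- u vertex: a = c
        have : a = Fin.last c := by
          rw [Fin.ext_iff]; simp; omega
        subst this
        exact (hadj_u_hub i).reachable
    · have : Sum.inr p = (Sum.inr ⟨(p:ℕ), p.2⟩ : CW t s c) := by simp
      rw [this]
      exact reachP _ p.2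
  have : Nonempty (CW t s c) := ⟨Sum.inr ⟨0, hs⟩⟩
  exact ⟨fun x y => (reach x).trans (reach y).symm⟩

lemma CG_free (hs : 1 ≤ s) (hc2 : 2 ≤ c) (he1 : 1 ≤ e) (hec : e ≤ c)
    {V : Type*} [Fintype V] (T : SimpleGraph V) [DecidableRel T.Adj]
    (hcard : Fintype.card V = c + 2) (hconn : T.Connected) (hns : ¬ IsStar T)
    (hdeg : ∀ v, T.degree v = 1 ∨ e + 2 ≤ T.degree v) :
    ¬ ContainsCopy T (CG t s c e) := by
  classical
  rintro ⟨f, hf⟩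
  -- generic degree bound through the embedding
  have hdegle : ∀ (v : V) (B : Finset (CW t s c)),
      (∀ w, (CG t s c e).Adj (f v) w → w ∈ B) → T.degree v ≤ B.card := by
    intro v B hB
    rw [← T.card_neighborFinset_eq_degree]
    apply Finset.card_le_card_of_injOn f
    · intro x hx
      rw [Finset.mem_coe, SimpleGraph.mem_neighborFinset] at hx
      exact hB _ (hf hx)
    · exact fun x _ y _ h => f.injective h
  -- a vertex mapped to some u_i has degree ≤ e+1
  have hu : ∀ (v : V) (i : Fin t) (a : Fin (c+1)), f v = Sum.inl (i, a) → (a:ℕ) = c →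
      T.degree v ≤ e + 1 := by
    intro v i a hfv ha
    have := hdegle v
      (((Finset.univ.filter (fun b : Fin (c+1) => (b:ℕ) < e)).image
          (fun b => (Sum.inl (i, b) : CW t s c)))
        ∪ {Sum.inr ⟨0, hs⟩}) ?_
    · refine le_trans this (le_trans (Finset.card_union_le _ _) ?_)
      have h1 : ((Finset.univ.filter (fun b : Fin (c+1) => (b:ℕ) < e)).image
          (fun b => (Sum.inl (i, b) : CW t s c))).card ≤ e := by
        refine le_trans Finset.card_image_le ?_
        have : (Finset.univ.filter (fun b : Fin (c+1) => (b:ℕ) < e)).card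
            ≤ (Finset.range e).card := by
          refine Finset.card_le_card_of_injOn (fun b => (b:ℕ)) ?_ ?_
          · intro b hb
            simp only [Finset.mem_coe, Finset.mem_filter] at hb
            exact Finset.mem_range.mpr hb.2
          · intro b _ b' _ hbb
            exact Fin.ext hbb
        simpa using this
      simpa using Nat.add_le_add h1 (le_refl 1)
    · intro w hw
      rw [hfv] at hw
      rcases CG_nbr_u hec ha hw with ⟨b, rfl, hb⟩ | ⟨p, rfl, hp⟩
      · apply Finset.mem_union_left
        apply Finset.mem_image.mpr
        exact ⟨b, by simp [hb], rfl⟩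
      · apply Finset.mem_union_right
        simp [Fin.ext_iff, hp]
  -- a vertex mapped to an extra with positive index has degree ≤ 2
  have hp2 : ∀ (v : V) (p : Fin s), f v = Sum.inr p → 1 ≤ (p:ℕ) → T.degree v ≤ 2 := by
    intro v p hfv hp
    have := hdegle v
      ((Finset.univ.filter (fun q : Fin s => (q:ℕ) = (p:ℕ)+1 ∨ ((q:ℕ))+1 = (p:ℕ))).image
        Sum.inr) ?_
    · refine le_trans this (le_trans (Finset.card_image_le) ?_)
      have : (Finset.univ.filter
          (fun q : Fin s => (q:ℕ) = (p:ℕ)+1 ∨ ((q:ℕ))+1 = (p:ℕ))).card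
          ≤ (Finset.univ : Finset (Fin 2)).card := by
        refine Finset.card_le_card_of_injOn
          (fun q => if (q:ℕ) < (p:ℕ) then (0 : Fin 2) else (1 : Fin 2)) ?_ ?_
        · intro q _; exact Finset.mem_univ _
        · intro q hq r hr hqr
          have h1 := (Finset.mem_filter.mp hq).2
          have h2 := (Finset.mem_filter.mp hr).2
          have hqr : (if (q:ℕ) < (p:ℕ) then (0:Fin 2) else 1)
              = (if (r:ℕ) < (p:ℕ) then (0:Fin 2) else 1) := hqr
          by_cases hql : (q:ℕ) < (p:ℕ) <;> by_cases hrl : (r:ℕ) < (p:ℕ)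
          · exact Fin.ext (by omega)
          · rw [if_pos hql, if_neg hrl] at hqr; exact absurd hqr (by decide)
          · rw [if_neg hql, if_pos hrl] at hqr; exact absurd hqr (by decide)
          · exact Fin.ext (by omega)
      simpa using this
    · intro w hw
      rw [hfv] at hw
      obtain ⟨q, rfl, hq⟩ := CG_nbr_extra hp hw
      apply Finset.mem_image.mpr
      refine ⟨q, ?_, rfl⟩
      simp only [Finset.mem_filter, Finset.mem_univ, true_and]
      omega
  -- internal vertices (degree ≥ 2) land in cliques
  have hint : ∀ v : V, 2 ≤ T.degree v →
      ∃ (i : Fin t) (a : Fin (c+1)), f v = Sum.inl (i, a) ∧ (a:ℕ) < c := by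
    intro v hv
    have hdv : e + 2 ≤ T.degree v := by rcases hdeg v with h | h; omega; exact h
    rcases hfv : f v with ⟨i, a⟩ | p
    · refine ⟨i, a, rfl, ?_⟩
      rcases Nat.lt_or_ge (a:ℕ) c with h | h
      · exact h
      · exfalso
        have hac : (a:ℕ) = c := by have := a.2; omega
        have := hu v i a hfv hac
        omega
    · exfalso
      rcases Nat.lt_or_ge 0 (p:ℕ) with h | h
      · have := hp2 v p hfv h
        omega
      · -- hub: use internal neighbor
        have hp0 : (p:ℕ) = 0 := by omega
        obtain ⟨w, hvw, hw2⟩ := internal_neighbor T hconn hns hv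
        have hdw : e + 2 ≤ T.degree w := by rcases hdeg w with h' | h'; omega; exact h'
        have hadj : (CG t s c e).Adj (Sum.inr p) (f w) := by rw [← hfv]; exact hf hvw
        rcases CG_nbr_hub hp0 hadj with ⟨j, b, hfw, hb⟩ | ⟨q, hfw, hq⟩
        · have := hu w j b hfw hb; omega
        · have := hp2 w q hfw (by omega); omega
  -- adjacent internal vertices are in the same block
  have hsame : ∀ (v w : V), T.Adj v w →
      ∀ (i j : Fin t) (a b : Fin (c+1)), f v = Sum.inl (i, a) → f w = Sum.inl (j, b) →
      i = j := by
    intro v w hvw i j a b hv hw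
    have hadj := hf hvw
    rw [hv, hw, CG_adj] at hadj
    rcases hadj.2 with h | h
    · exact h.1
    · exact h.1.symm
  -- pick a starting internal vertex
  obtain ⟨x₀, hx₀⟩ := exists_deg_two T hconn (by omega)
  obtain ⟨i₀, a₀, hfx₀, ha₀⟩ := hint x₀ hx₀
  -- main walk lemma: every vertex maps into block i₀
  have walkkey : ∀ (x z : V) (w : T.Walk x z), w.IsPath → 2 ≤ T.degree x →
      (∀ (i : Fin t) (a : Fin (c+1)), f x = Sum.inl (i, a) → i = i₀) →
      ∃ b : Fin (c+1), f z = Sum.inl (i₀, b) := by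
    intro x z w
    induction w with
    | nil =>
      intro _ hx hix
      obtain ⟨i, a, hfx, _⟩ := hint _ hx
      exact ⟨a, by rw [hfx, hix i a hfx]⟩
    | @cons xx yy zz h q ih =>
      intro hpath hx hix
      rcases Nat.lt_or_ge (T.degree yy) 2 with hy | hy
      · -- yy is a leaf
        have hy1 : T.degree yy = 1 := by
          have : 1 ≤ T.degree yy := by
            rw [Nat.one_le_iff_ne_zero, ← Nat.pos_iff_ne_zero, T.degree_pos_iff_exists_adj]
            exact ⟨xx, h.symm⟩
          omega
        cases q with
        | nil =>
          obtain ⟨i, a, hfx, hac⟩ := hint _ hx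
          have hi : i = i₀ := hix i a hfx
          rw [hi] at hfx
          have hadj : (CG t s c e).Adj (Sum.inl (i₀, a)) (f yy) := by
            rw [← hfx]; exact hf h
          obtain ⟨b, hb, _⟩ := CG_nbr_clique hac hadj
          exact ⟨b, hb⟩
        | @cons _ y' _ h2 q' =>
          exfalso
          have hxx : y' = xx := (nbhd_eq_of_deg_one T hy1 h.symm) y' h2
          subst hxx
          rw [SimpleGraph.Walk.cons_isPath_iff] at hpath
          apply hpath.2
          rw [SimpleGraph.Walk.support_cons]
          exact List.mem_cons_of_mem _ (SimpleGraph.Walk.start_mem_support q')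
      · -- yy internal: same block, recurse
        obtain ⟨iy, by', hfy, hby⟩ := hint _ hy
        obtain ⟨i, a, hfx, _⟩ := hint _ hx
        have hi : i = i₀ := hix i a hfx
        have hiy : iy = i₀ := by
          have := hsame xx yy h i iy a by' hfx hfy
          rw [← this, hi]
        apply ih hpath.of_cons hy
        intro j b hfy'
        rw [hfy'] at hfy
        have hji : j = iy ∧ b = by' := by simpa using hfy
        exact hji.1.trans hiy
  -- every vertex maps into block i₀
  have key : ∀ z : V, ∃ b : Fin (c+1), f z = Sum.inl (i₀, b) := by
    intro z
    obtain ⟨w⟩ := hconn.preconnected x₀ z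
    refine walkkey x₀ z w.toPath w.toPath.2 hx₀ ?_
    intro i a hfx
    rw [hfx₀] at hfx
    have : i₀ = i ∧ a₀ = a := by simpa using hfx
    exact this.1.symm
  -- contradiction by cardinality
  have hinj : Function.Injective (fun z : V => (key z).choose) := by
    intro z w hz
    apply f.injective
    rw [(key z).choose_spec, (key w).choose_spec]
    simp only at hz
    rw [hz]
  have := Fintype.card_le_of_injective _ hinj
  rw [hcard, Fintype.card_fin] at this
  omega


/-- the edge-indexing map for the counting argument -/
def Fmap (hs : 1 ≤ s) (hec : e ≤ c) :
    (Fin t × ((↥((⊤ : SimpleGraph (Fin c)).edgeFinset)) ⊕ Fin (e+1))) → Sym2 (CW t s c) :=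
  fun x =>
    match x with
    | (i, Sum.inl z) => Sym2.map (fun a : Fin c => (Sum.inl (i, a.castSucc) : CW t s c)) z.1
    | (i, Sum.inr j) =>
        if h : (j:ℕ) < e then
          s(Sum.inl (i, Fin.last c), (Sum.inl (i, (⟨(j:ℕ), by omega⟩ : Fin (c+1))) : CW t s c))
        else s(Sum.inl (i, Fin.last c), (Sum.inr ⟨0, hs⟩ : CW t s c))

lemma CG_count (hs : 1 ≤ s) (he1 : 1 ≤ e) (hec : e ≤ c) :
    t * (c.choose 2 + (e+1)) ≤ Nat.card (CG t s c e).edgeSet := by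
  classical
  -- a mapped clique pair never equals a pair containing the special vertex
  have keyB : ∀ (i i' : Fin t) (z : Sym2 (Fin c)) (w : CW t s c),
      Sym2.map (fun a : Fin c => (Sum.inl (i, a.castSucc) : CW t s c)) z
        ≠ s(Sum.inl (i', Fin.last c), w) := by
    intro i i' z w
    induction z using Sym2.ind with
    | _ a b =>
      intro hcon
      rw [Sym2.map_pair_eq, Sym2.eq_iff] at hcon
      rcases hcon with ⟨h1, h2⟩ | ⟨h1, h2⟩
      · simp only [Sum.inl.injEq, Prod.mk.injEq, Fin.ext_iff, Fin.coe_castSucc,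
          Fin.val_last] at h1
        have := a.2
        omega
      · simp only [Sum.inl.injEq, Prod.mk.injEq, Fin.ext_iff, Fin.coe_castSucc,
          Fin.val_last] at h2
        have := b.2
        omega
  -- mapped clique pairs determine the block and the pair
  have keyA : ∀ (i i' : Fin t) (z z' : Sym2 (Fin c)),
      Sym2.map (fun a : Fin c => (Sum.inl (i, a.castSucc) : CW t s c)) z
        = Sym2.map (fun a : Fin c => (Sum.inl (i', a.castSucc) : CW t s c)) z' →
      i = i' ∧ z = z' := by
    intro i i' z z'
    induction z using Sym2.ind with
    | _ a b =>
      induction z' using Sym2.ind with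
      | _ a' b' =>
        intro h
        rw [Sym2.map_pair_eq, Sym2.map_pair_eq, Sym2.eq_iff] at h
        rcases h with ⟨h1, h2⟩ | ⟨h1, h2⟩ <;>
          simp only [Sum.inl.injEq, Prod.mk.injEq] at h1 h2
        · obtain ⟨rfl, ha⟩ := h1
          obtain ⟨-, hb⟩ := h2
          rw [Fin.castSucc_injective _ ha, Fin.castSucc_injective _ hb]
          exact ⟨rfl, rfl⟩
        · obtain ⟨rfl, ha⟩ := h1
          obtain ⟨-, hb⟩ := h2
          rw [Fin.castSucc_injective _ ha, Fin.castSucc_injective _ hb]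
          exact ⟨rfl, Sym2.eq_swap⟩
  -- membership of the image in the edge set
  have hmem : ∀ x, Fmap (t := t) (s := s) (c := c) (e := e) hs hec x ∈ (CG t s c e).edgeSet := by
    rintro ⟨i, z | j⟩
    · obtain ⟨z, hz⟩ := z
      simp only [Fmap]
      induction z using Sym2.ind with
      | _ a b =>
        rw [SimpleGraph.mem_edgeFinset, SimpleGraph.mem_edgeSet, SimpleGraph.top_adj] at hz
        rw [Sym2.map_pair_eq, SimpleGraph.mem_edgeSet, CG_adj]
        constructor
        · simp only [ne_eq, Sum.inl.injEq, Prod.mk.injEq, true_and]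
          intro hcon
          exact hz (Fin.castSucc_injective _ hcon)
        · exact Or.inl ⟨rfl, Or.inl ⟨by simp, by simp⟩⟩
    · simp only [Fmap]
      split
      · rw [SimpleGraph.mem_edgeSet, CG_adj]
        constructor
        · simp only [ne_eq, Sum.inl.injEq, Prod.mk.injEq, true_and]
          rw [Fin.ext_iff]
          simp only [Fin.val_last]
          omega
        · refine Or.inl ⟨rfl, Or.inr ⟨by simp, by assumption⟩⟩
      · rw [SimpleGraph.mem_edgeSet, CG_adj]
        exact ⟨by simp, Or.inl ⟨by simp, rfl⟩⟩
  -- injectivity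
  have hinj : Function.Injective (Fmap (t := t) (s := s) (c := c) (e := e) hs hec) := by
    rintro ⟨i, zi⟩ ⟨i', zi'⟩ hF
    rcases zi with ⟨z, hz⟩ | j <;> rcases zi' with ⟨z', hz'⟩ | j'
    · simp only [Fmap] at hF
      obtain ⟨rfl, rfl⟩ := keyA i i' z z' hF
      rfl
    · exfalso
      simp only [Fmap] at hF
      split at hF <;> exact keyB i i' z _ hF
    · exfalso
      simp only [Fmap] at hF
      split at hF <;> exact keyB i' i z' _ hF.symm
    · simp only [Fmap] at hF
      split at hF <;> split at hF <;> rename_i hje hje' <;> rw [Sym2.eq_iff] at hF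
      · rcases hF with ⟨h1, h2⟩ | ⟨h1, h2⟩
        · simp only [Sum.inl.injEq, Prod.mk.injEq] at h1 h2
          obtain ⟨rfl, -⟩ := h1
          have hj : j = j' := by
            have h3 := h2.2
            rw [Fin.ext_iff] at h3 ⊢
            simpa using h3
          rw [hj]
        · exfalso
          simp only [Sum.inl.injEq, Prod.mk.injEq, Fin.ext_iff, Fin.val_last] at h1 h2
          omega
      · exfalso
        rcases hF with ⟨h1, h2⟩ | ⟨h1, h2⟩
        · exact absurd h2 (by simp)
        · exact absurd h1 (by simp)
      · exfalso
        rcases hF with ⟨h1, h2⟩ | ⟨h1, h2⟩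
        · exact absurd h2 (by simp)
        · exact absurd h2 (by simp)
      · rcases hF with ⟨h1, h2⟩ | ⟨h1, h2⟩
        · have hii : i = i' := by
            simp only [Sum.inl.injEq, Prod.mk.injEq] at h1
            exact h1.1
          have hj : j = j' := by
            have hb := j.2; have hb' := j'.2
            exact Fin.ext (by omega)
          rw [hii, hj]
        · exact absurd h1 (by simp)
  -- conclude
  have h1 : Nat.card (Fin t × (↥((⊤ : SimpleGraph (Fin c)).edgeFinset) ⊕ Fin (e+1)))
      = t * (c.choose 2 + (e+1)) := by
    rw [Nat.card_eq_fintype_card, Fintype.card_prod, Fintype.card_sum, Fintype.card_coe,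
      SimpleGraph.card_edgeFinset_top_eq_card_choose_two]
    simp
  rw [← h1, Nat.card_coe_set_eq, ← Nat.card_range_of_injective hinj, Nat.card_coe_set_eq]
  apply Set.ncard_le_ncard ?_ (Set.toFinite _)
  rintro x ⟨y, rfl⟩
  exact hmem y

end Construction

/-- Proposition (second-smallest degree construction): if `T` is a tree on `k ≥ 4`
vertices which is not a star and `δ_2(T) > 2`, then for `n ≥ k`,
`ex_c(n,T) ≥ ⌊(n-1)/(k-1)⌋ (C(k-2, 2) + δ_2(T) - 1)`. -/
theorem exConn_ge_of_delta2 {V : Type*} [Fintype V] (T : SimpleGraph V)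
    [DecidableRel T.Adj] (k : ℕ) (hk : 4 ≤ k) (hcard : Fintype.card V = k)
    (hT : T.IsTree) (hns : ¬ IsStar T) (hd2 : 2 < delta2 T)
    (n : ℕ) (hn : k ≤ n) :
    (n - 1) / (k - 1) * ((k - 2).choose 2 + delta2 T - 1) ≤ exConn n T := by
  classical
  have hconn : T.Connected := hT.isConnected
  set d := delta2 T with hd
  -- δ₂ ≤ k - 1
  obtain ⟨v2, hv2⟩ := exists_deg_two T hconn (by omega)
  have hdle : d ≤ k - 1 := by
    have h1 : d ≤ T.degree v2 := Nat.sInf_le ⟨by omega, v2, rfl⟩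
    have h2 : T.degree v2 < Fintype.card V := T.degree_lt_card_verts v2
    omega
  have hdeg : ∀ v, T.degree v = 1 ∨ d ≤ T.degree v := by
    intro v
    have h1 : 1 ≤ T.degree v := deg_pos_of_connected T hconn (by omega) v
    rcases Nat.lt_or_ge (T.degree v) 2 with h | h
    · left; omega
    · right; exact Nat.sInf_le ⟨by omega, v, rfl⟩
  -- parameters
  set t := (n-1)/(k-1) with ht'
  set c := k - 2 with hc'
  set e := d - 2 with he'
  have htk : t*(k-1) ≤ n-1 := Nat.div_mul_le_self _ _
  set s := n - t*(k-1) with hs'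
  have ht1 : 1 ≤ t := by
    rw [ht']
    rw [Nat.le_div_iff_mul_le (by omega)]
    omega
  have hs1 : 1 ≤ s := by omega
  have he1 : 1 ≤ e := by omega
  have hec : e ≤ c := by omega
  have hc2 : 2 ≤ c := by omega
  -- transport the construction to `Fin n`
  have hcardW : Fintype.card (CW t s c) = n := by
    simp only [Fintype.card_sum, Fintype.card_prod, Fintype.card_fin]
    have : t * (c + 1) = t * (k-1) := by
      congr 1
      omega
    omega
  let e0 : CW t s c ≃ Fin n := Fintype.equivFinOfCardEq hcardW
  let G' : SimpleGraph (Fin n) := SimpleGraph.comap (⇑e0.symm) (CG t s c e)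
  -- G' is connected
  have hG'conn : G'.Connected := by
    have h0 := CG_conn (t := t) (s := s) (c := c) (e := e) ht1 hs1 (by omega) he1 hec
    have hne : Nonempty (Fin n) := ⟨⟨0, by omega⟩⟩
    let ψ : CG t s c e →g G' :=
      ⟨⇑e0, by intro a b hab; simpa [G', SimpleGraph.comap] using hab⟩
    constructor
    intro x y
    have hr := (h0.preconnected (e0.symm x) (e0.symm y)).map ψ
    have h2 : ∀ z : Fin n, ψ (e0.symm z) = z := fun z => e0.apply_symm_apply z
    rwa [h2, h2] at hr
  -- G' is T-free
  have hdeg2 : ∀ v, T.degree v = 1 ∨ e + 2 ≤ T.degree v := by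
    intro v
    rcases hdeg v with h | h
    · exact Or.inl h
    · right; omega
  have hG'free : ¬ ContainsCopy T G' := by
    rintro ⟨f, hf⟩
    apply CG_free (t := t) hs1 hc2 he1 hec T (by omega) hconn hns hdeg2
    exact ⟨f.trans e0.symm.toEmbedding, fun a b hab => hf hab⟩
  -- edge count
  have hcount : t * (c.choose 2 + (e+1)) ≤ G'.edgeSet.ncard := by
    refine le_trans (CG_count hs1 he1 hec) ?_
    rw [← Nat.card_coe_set_eq]
    have hm : ∀ z : Sym2 (CW t s c), z ∈ (CG t s c e).edgeSet →
        Sym2.map (⇑e0) z ∈ G'.edgeSet := by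
      intro z
      induction z using Sym2.ind with
      | _ a b =>
        intro hz
        rw [Sym2.map_pair_eq, SimpleGraph.mem_edgeSet]
        rw [SimpleGraph.mem_edgeSet] at hz
        simpa [G', SimpleGraph.comap] using hz
    refine Nat.card_le_card_of_injective
      (fun z : ↥(CG t s c e).edgeSet => (⟨Sym2.map (⇑e0) z.1, hm z.1 z.2⟩ : ↥G'.edgeSet)) ?_
    intro z z' hzz
    have := Subtype.ext_iff.mp hzz
    exact Subtype.ext (Sym2.map.injective e0.injective this)
  -- put it together
  have hmemS : G'.edgeSet.ncard ∈
      {m | ∃ G : SimpleGraph (Fin n), G.Connected ∧ ¬ ContainsCopy T G ∧ m = G.edgeSet.ncard} :=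
    ⟨G', hG'conn, hG'free, rfl⟩
  have hbdd : BddAbove
      {m | ∃ G : SimpleGraph (Fin n), G.Connected ∧ ¬ ContainsCopy T G ∧ m = G.edgeSet.ncard} := by
    refine ⟨Fintype.card (Sym2 (Fin n)), ?_⟩
    rintro m ⟨G, -, -, rfl⟩
    have := Set.ncard_le_ncard (Set.subset_univ G.edgeSet) Set.finite_univ
    rwa [Set.ncard_univ, Nat.card_eq_fintype_card] at this
  have hfinal := le_csSup hbdd hmemS
  have harith : c.choose 2 + d - 1 = c.choose 2 + (e+1) := by omega
  calc t * (c.choose 2 + d - 1) = t * (c.choose 2 + (e+1)) := by rw [harith]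
    _ ≤ G'.edgeSet.ncard := hcount
    _ ≤ exConn n T := hfinal
end
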